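/- arXiv:1510.00586 — 2 statements merged into one kernel-verified Lean document; each statement's English description precedes it below -/
import Mathlib

section
/- Extension lemma: let M be the countable (K₀,≤)-generic graph, let A be a finite set of vertices of M, let X = gcl(A), and let g be an automorphism of the induced subgraph of M on X. Then there is an automorphism γ of M whose restriction to X equals g. -/
open scoped Cardinal

/-- Number of edges of the graph `G` with both endpoints in `A`
(ordered pairs counted and divided by two). -/
noncomputable def edgeCount {V : Type*} (G : SimpleGraph V) (A : Set V) : ℕ :=
  {p : V × V | p.1 ∈ A ∧ p.2 ∈ A ∧ G.Adj p.1 p.2}.ncard / 2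

/-- The pre-dimension `δ(A) = m·|A| − e(A)`. -/
noncomputable def delta {V : Type*} (m : ℕ) (G : SimpleGraph V) (A : Set V) : ℤ :=
  (m : ℤ) * A.ncard - edgeCount G A

/-- `A` is self-sufficient (`≤`-closed) in `B`:  `A ⊆ B` and `δ(A') ≥ δ(A)` for
every finite `A'` with `A ⊆ A' ⊆ B`. -/
def SelfSuff {V : Type*} (m : ℕ) (G : SimpleGraph V) (A B : Set V) : Prop :=
  A ⊆ B ∧ ∀ A' : Set V, A'.Finite → A ⊆ A' → A' ⊆ B → delta m G A ≤ delta m G A'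

/-- A graph belongs to the class `K₀` if `δ(A') ≥ 0` for every set `A'` of its
vertices (used for finite graphs). -/
def InK0 {V : Type*} (m : ℕ) (G : SimpleGraph V) : Prop :=
  ∀ A : Set V, 0 ≤ delta m G A

/-- `G` is a `(K₀,≤)`-generic graph: (i) it is the union of an increasing chain of
finite self-sufficient subsets; (ii) every isomorphism between finite self-sufficient
induced subgraphs extends to an automorphism; (iii) every finite graph in `K₀` is
isomorphic to the induced subgraph on some finite self-sufficient subset. -/
def IsGeneric (m : ℕ) {V : Type} (G : SimpleGraph V) : Prop :=
  (∃ F : ℕ → Set V, (∀ n, (F n).Finite) ∧ (∀ n, F n ⊆ F (n + 1)) ∧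
      (∀ n, SelfSuff m G (F n) Set.univ) ∧ (⋃ n, F n) = Set.univ) ∧
  (∀ A B : Set V, A.Finite → B.Finite → SelfSuff m G A Set.univ → SelfSuff m G B Set.univ →
      ∀ e : G.induce A ≃g G.induce B, ∃ g : G ≃g G, ∀ a : A, g a = (e a : V)) ∧
  (∀ (W : Type) (_ : Fintype W) (H : SimpleGraph W), InK0 m H →
      ∃ s : Set V, s.Finite ∧ SelfSuff m G s Set.univ ∧ Nonempty (H ≃g G.induce s))

/-- The self-sufficient closure `cl(A)`: the intersection of all finite
self-sufficient subsets of the ambient graph containing `A` (which is the smallest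
such set whenever a smallest one exists). -/
def scl {V : Type*} (m : ℕ) (G : SimpleGraph V) (A : Set V) : Set V :=
  ⋂₀ {B : Set V | A ⊆ B ∧ B.Finite ∧ SelfSuff m G B Set.univ}

/-- The dimension `d(A) = δ(cl(A))`. -/
noncomputable def gdim {V : Type*} (m : ℕ) (G : SimpleGraph V) (A : Set V) : ℤ :=
  delta m G (scl m G A)

/-- The geometric closure
`gcl(X) = { v : d(A ∪ {v}) = d(A) for some finite A ⊆ X }`. -/
def gcl {V : Type*} (m : ℕ) (G : SimpleGraph V) (X : Set V) : Set V :=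
  {v | ∃ A : Set V, A ⊆ X ∧ A.Finite ∧ gdim m G (A ∪ {v}) = gdim m G A}

/-- The pointwise stabilizer `Aut_A(M)` of a set `A` of vertices, as a subgroup of
the automorphism group. -/
def pointStab {V : Type*} (G : SimpleGraph V) (A : Set V) : Subgroup (G ≃g G) where
  carrier := {g | ∀ a ∈ A, g a = a}
  one_mem' := fun a _ => rfl
  mul_mem' := by
    intro g h hg hh a ha
    show g (h a) = a
    rw [hh a ha, hg a ha]
  inv_mem' := by
    intro g hg a ha
    show g⁻¹ a = a
    conv_lhs => rw [← hg a ha]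
    simp

/-- The setwise stabilizer `Aut_{{X}}(M) = { g : g[X] = X }` of a set `X` of
vertices, as a subgroup of the automorphism group. -/
def setStab {V : Type*} (G : SimpleGraph V) (X : Set V) : Subgroup (G ≃g G) where
  carrier := {g | (fun v => g v) '' X = X}
  one_mem' := by simp
  mul_mem' := by
    intro g h hg hh
    show (fun v => g (h v)) '' X = X
    rw [show (fun v => g (h v)) = (fun v => g v) ∘ (fun v => h v) from rfl,
      Set.image_comp, hh, hg]
  inv_mem' := by
    intro g hg
    show (fun v => g⁻¹ v) '' X = X
    conv_lhs => rw [← hg]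
    rw [← Set.image_comp]
    have : (fun v => g⁻¹ v) ∘ (fun v => g v) = id := by
      funext v
      show g⁻¹ (g v) = v
      simp
    rw [this, Set.image_id]

/-- The topology of pointwise convergence on the automorphism group of a graph
(the vertex set being discrete). -/
def autTop (V : Type*) (G : SimpleGraph V) : TopologicalSpace (G ≃g G) :=
  TopologicalSpace.induced (fun g => (g : V → V))
    (@Pi.topologicalSpace V (fun _ => V) (fun _ => ⊥))


namespace ExtAux
open Set



variable {V : Type}

/-- the set of ordered adjacent pairs inside `A`. -/
def pset (G : SimpleGraph V) (A : Set V) : Set (V × V) :=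
  {p : V × V | p.1 ∈ A ∧ p.2 ∈ A ∧ G.Adj p.1 p.2}

variable (m : ℕ) {G : SimpleGraph V}

lemma pset_finite {A : Set V} (hA : A.Finite) : (pset G A).Finite := by
  apply Set.Finite.subset (hA.prod hA)
  rintro ⟨u, v⟩ ⟨h1, h2, _⟩
  exact ⟨h1, h2⟩

/-- evenness auxiliary: a finite swap-closed set of non-diagonal pairs has even card. -/
lemma even_ncard_aux : ∀ (n : ℕ) (S : Set (V × V)), S.ncard = n → S.Finite →
    (∀ p ∈ S, Prod.swap p ∈ S) → (∀ p ∈ S, p.1 ≠ p.2) → Even n := by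
  intro n
  induction n using Nat.strong_induction_on with
  | _ n ih =>
    intro S hcard hfin hswap hne
    rcases Nat.eq_zero_or_pos n with h0 | hpos
    · simp [h0]
    · have hSne : S.Nonempty := by
        rw [Set.nonempty_iff_ne_empty]
        intro h
        rw [h] at hcard
        simp at hcard
        omega
      obtain ⟨p, hp⟩ := hSne
      have hps : Prod.swap p ∈ S := hswap p hp
      have hpne : p ≠ Prod.swap p := by
        intro h
        have := hne p hp
        apply this
        have : p.1 = (Prod.swap p).1 := by rw [← h]
        simpa using this
      set S' := S \ {p, Prod.swap p} with hS'
      have hsub : {p, Prod.swap p} ⊆ S := by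
        intro q hq
        rcases hq with h | h
        · subst h; exact hp
        · simp only [Set.mem_singleton_iff] at h; subst h; exact hps
      have hcard2 : ({p, Prod.swap p} : Set (V × V)).ncard = 2 :=
        Set.ncard_pair hpne
      have hcardS' : S'.ncard + 2 = n := by
        have := Set.ncard_diff_add_ncard_of_subset hsub hfin
        rw [hcard2] at this
        rw [← hcard, ← this]
      have hS'fin : S'.Finite := hfin.subset Set.diff_subset
      have hlt : S'.ncard < n := by omega
      have hev : Even S'.ncard := by
        apply ih _ hlt S' rfl hS'fin
        · rintro q ⟨hqS, hq2⟩
          refine ⟨hswap q hqS, ?_⟩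
          simp only [Set.mem_insert_iff, Set.mem_singleton_iff] at hq2 ⊢
          push_neg at hq2 ⊢
          constructor
          · intro h
            apply hq2.2
            rw [← h, Prod.swap_swap]
          · intro h
            apply hq2.1
            have := congrArg Prod.swap h
            simpa using this
        · intro q hq; exact hne q hq.1
      have : Even (S'.ncard + 2) := by
        rcases hev with ⟨k, hk⟩
        exact ⟨k + 1, by omega⟩
      rw [hcardS'] at this
      exact this

lemma pset_even {A : Set V} (hA : A.Finite) : Even (pset G A).ncard := by
  apply even_ncard_aux _ _ rfl (pset_finite hA)
  · rintro ⟨u, v⟩ ⟨h1, h2, h3⟩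
    exact ⟨h2, h1, h3.symm⟩
  · rintro ⟨u, v⟩ ⟨-, -, h3⟩ h
    exact G.ne_of_adj h3 (by simpa using h)

lemma two_mul_edgeCount {A : Set V} (hA : A.Finite) :
    2 * edgeCount G A = (pset G A).ncard := by
  have := pset_even (G := G) hA
  rcases this with ⟨k, hk⟩
  show 2 * ((pset G A).ncard / 2) = (pset G A).ncard
  omega

/-- `2·δ(A) = 2m|A| - pe(A)` -/
lemma two_delta {A : Set V} (hA : A.Finite) :
    2 * delta m G A = 2 * (m : ℤ) * A.ncard - ((pset G A).ncard : ℤ) := by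
  unfold delta
  have h := two_mul_edgeCount (G := G) hA
  have : ((2 * edgeCount G A : ℕ) : ℤ) = ((pset G A).ncard : ℤ) := by rw [h]
  push_cast at this ⊢
  linarith

lemma pset_inter (C D : Set V) : pset G (C ∩ D) = pset G C ∩ pset G D := by
  ext ⟨u, v⟩
  simp only [pset, Set.mem_setOf_eq, Set.mem_inter_iff]
  tauto

lemma pset_union_sup (C D : Set V) : pset G C ∪ pset G D ⊆ pset G (C ∪ D) := by
  rintro ⟨u, v⟩ h
  rcases h with ⟨h1, h2, h3⟩ | ⟨h1, h2, h3⟩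
  · exact ⟨Or.inl h1, Or.inl h2, h3⟩
  · exact ⟨Or.inr h1, Or.inr h2, h3⟩

lemma pe_union_ge {C D : Set V} (hC : C.Finite) (hD : D.Finite) :
    (pset G C).ncard + (pset G D).ncard ≤ (pset G (C ∪ D)).ncard + (pset G (C ∩ D)).ncard := by
  have h1 : (pset G C ∪ pset G D).ncard + (pset G C ∩ pset G D).ncard
      = (pset G C).ncard + (pset G D).ncard :=
    Set.ncard_union_add_ncard_inter _ _ (pset_finite hC) (pset_finite hD)
  have h2 : (pset G C ∪ pset G D).ncard ≤ (pset G (C ∪ D)).ncard :=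
    Set.ncard_le_ncard (pset_union_sup C D) (pset_finite (hC.union hD))
  rw [← pset_inter] at h1
  omega

lemma delta_submod {C D : Set V} (hC : C.Finite) (hD : D.Finite) :
    delta m G (C ∪ D) + delta m G (C ∩ D) ≤ delta m G C + delta m G D := by
  have key := pe_union_ge (G := G) hC hD
  have hcard : (C ∪ D).ncard + (C ∩ D).ncard = C.ncard + D.ncard :=
    Set.ncard_union_add_ncard_inter _ _ hC hD
  have t1 := two_delta m (G := G) hC
  have t2 := two_delta m (G := G) hD
  have t3 := two_delta m (G := G) (hC.union hD)
  have t4 := two_delta m (G := G) (hC.subset (Set.inter_subset_left (t := D)))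
  have hcard' : ((C ∪ D).ncard : ℤ) + ((C ∩ D).ncard : ℤ) = (C.ncard : ℤ) + (D.ncard : ℤ) := by
    exact_mod_cast hcard
  have key' : ((pset G C).ncard : ℤ) + ((pset G D).ncard : ℤ)
      ≤ ((pset G (C ∪ D)).ncard : ℤ) + ((pset G (C ∩ D)).ncard : ℤ) := by exact_mod_cast key
  nlinarith [t1, t2, t3, t4]

/-- exact version when there are no "cross" edges -/
lemma delta_union_eq {C D : Set V} (hC : C.Finite) (hD : D.Finite)
    (hcross : ∀ u ∈ C \ D, ∀ v ∈ D \ C, ¬ G.Adj u v) :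
    delta m G (C ∪ D) + delta m G (C ∩ D) = delta m G C + delta m G D := by
  have hpe : pset G (C ∪ D) = pset G C ∪ pset G D := by
    apply Set.Subset.antisymm _ (pset_union_sup C D)
    rintro ⟨u, v⟩ ⟨h1, h2, h3⟩
    replace h1 : u ∈ C ∪ D := h1
    replace h2 : v ∈ C ∪ D := h2
    replace h3 : G.Adj u v := h3
    by_cases huC : u ∈ C
    · by_cases hvC : v ∈ C
      · exact Or.inl ⟨huC, hvC, h3⟩
      · have hvD : v ∈ D := h2.resolve_left hvC
        by_cases huD : u ∈ D
        · exact Or.inr ⟨huD, hvD, h3⟩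
        · exact absurd h3 (hcross u ⟨huC, huD⟩ v ⟨hvD, hvC⟩)
    · have huD : u ∈ D := h1.resolve_left huC
      by_cases hvD : v ∈ D
      · exact Or.inr ⟨huD, hvD, h3⟩
      · have hvC : v ∈ C := h2.resolve_right hvD
        exact absurd h3.symm (hcross v ⟨hvC, hvD⟩ u ⟨huD, huC⟩)
  have h1 : (pset G C ∪ pset G D).ncard + (pset G C ∩ pset G D).ncard
      = (pset G C).ncard + (pset G D).ncard :=
    Set.ncard_union_add_ncard_inter _ _ (pset_finite hC) (pset_finite hD)
  rw [← pset_inter] at h1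
  have hcard : (C ∪ D).ncard + (C ∩ D).ncard = C.ncard + D.ncard :=
    Set.ncard_union_add_ncard_inter _ _ hC hD
  have t1 := two_delta m (G := G) hC
  have t2 := two_delta m (G := G) hD
  have t3 := two_delta m (G := G) (hC.union hD)
  have t4 := two_delta m (G := G) (hC.subset (Set.inter_subset_left (t := D)))
  rw [hpe] at t3
  have hcard' : ((C ∪ D).ncard : ℤ) + ((C ∩ D).ncard : ℤ) = (C.ncard : ℤ) + (D.ncard : ℤ) := by
    exact_mod_cast hcard
  have h1' : ((pset G C ∪ pset G D).ncard : ℤ) + ((pset G (C ∩ D)).ncard : ℤ)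
      = ((pset G C).ncard : ℤ) + ((pset G D).ncard : ℤ) := by exact_mod_cast h1
  have hdouble : 2 * delta m G (C ∪ D) + 2 * delta m G (C ∩ D)
      = 2 * delta m G C + 2 * delta m G D := by
    linear_combination t3 + t4 - t1 - t2 + 2 * (m : ℤ) * hcard' - h1'
  linarith

/-- strict version in presence of a cross edge -/
lemma delta_union_lt {C D : Set V} (hC : C.Finite) (hD : D.Finite)
    {w z : V} (hw : w ∈ C \ D) (hz : z ∈ D \ C) (hadj : G.Adj w z) :
    delta m G (C ∪ D) + delta m G (C ∩ D) + 1 ≤ delta m G C + delta m G D := by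
  have hwz : w ≠ z := fun h => hw.2 (h ▸ hz.1)
  have hmem1 : (w, z) ∉ pset G C ∪ pset G D := by
    rintro (⟨-, h2, -⟩ | ⟨h1, -, -⟩)
    · exact hz.2 h2
    · exact hw.2 h1
  have hmem2 : (z, w) ∉ insert (w, z) (pset G C ∪ pset G D) := by
    rintro (h | (⟨h1, -, -⟩ | ⟨-, h2, -⟩))
    · exact hwz (congrArg Prod.fst h).symm
    · exact hz.2 h1
    · exact hw.2 h2
  have hsub : insert (z, w) (insert (w, z) (pset G C ∪ pset G D)) ⊆ pset G (C ∪ D) := by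
    rintro p (h | h | h)
    · subst h; exact ⟨Or.inr hz.1, Or.inl hw.1, hadj.symm⟩
    · subst h; exact ⟨Or.inl hw.1, Or.inr hz.1, hadj⟩
    · exact pset_union_sup C D h
  have hfinU : (pset G C ∪ pset G D).Finite := (pset_finite hC).union (pset_finite hD)
  have hc1 : (insert ((w, z) : V × V) (pset G C ∪ pset G D)).ncard
      = (pset G C ∪ pset G D).ncard + 1 := Set.ncard_insert_of_notMem hmem1 hfinU
  have hc2 : (insert ((z, w) : V × V) (insert (w, z) (pset G C ∪ pset G D))).ncard
      = (insert ((w, z) : V × V) (pset G C ∪ pset G D)).ncard + 1 :=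
    Set.ncard_insert_of_notMem hmem2 (hfinU.insert _)
  have hle : (insert ((z, w) : V × V) (insert (w, z) (pset G C ∪ pset G D))).ncard
      ≤ (pset G (C ∪ D)).ncard :=
    Set.ncard_le_ncard hsub (pset_finite (hC.union hD))
  have h1 : (pset G C ∪ pset G D).ncard + (pset G C ∩ pset G D).ncard
      = (pset G C).ncard + (pset G D).ncard :=
    Set.ncard_union_add_ncard_inter _ _ (pset_finite hC) (pset_finite hD)
  rw [← pset_inter] at h1
  have hcard : (C ∪ D).ncard + (C ∩ D).ncard = C.ncard + D.ncard :=
    Set.ncard_union_add_ncard_inter _ _ hC hD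
  have t1 := two_delta m (G := G) hC
  have t2 := two_delta m (G := G) hD
  have t3 := two_delta m (G := G) (hC.union hD)
  have t4 := two_delta m (G := G) (hC.subset (Set.inter_subset_left (t := D)))
  have hcard' : ((C ∪ D).ncard : ℤ) + ((C ∩ D).ncard : ℤ) = (C.ncard : ℤ) + (D.ncard : ℤ) := by
    exact_mod_cast hcard
  have hkey : ((pset G C).ncard : ℤ) + ((pset G D).ncard : ℤ) + 2
      ≤ ((pset G (C ∪ D)).ncard : ℤ) + ((pset G (C ∩ D)).ncard : ℤ) := by
    have : (pset G C ∪ pset G D).ncard + 2 ≤ (pset G (C ∪ D)).ncard := by omega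
    have h2' : (pset G C ∪ pset G D).ncard + 2 + (pset G (C ∩ D)).ncard
        ≤ (pset G (C ∪ D)).ncard + (pset G (C ∩ D)).ncard := by omega
    have := h1
    push_cast
    omega
  have hm2 : 2 * (m : ℤ) * ((C ∪ D).ncard : ℤ) + 2 * (m : ℤ) * ((C ∩ D).ncard : ℤ)
      = 2 * (m : ℤ) * (C.ncard : ℤ) + 2 * (m : ℤ) * (D.ncard : ℤ) := by
    linear_combination 2 * (m : ℤ) * hcard'
  linarith


/-! ### consequences of genericity: nonnegativity -/

lemma delta_empty : delta m G (∅ : Set V) = 0 := by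
  have h : {p : V × V | p.1 ∈ (∅ : Set V) ∧ p.2 ∈ (∅ : Set V) ∧ G.Adj p.1 p.2} = ∅ := by
    ext ⟨u, v⟩; simp
  simp [delta, edgeCount, h]

lemma ss_empty (hG : IsGeneric m G) : SelfSuff m G (∅ : Set V) Set.univ := by
  obtain ⟨s, hsfin, hss, ⟨e⟩⟩ := hG.2.2 Empty inferInstance ⊥ (by
    intro A
    have : A = (∅ : Set Empty) := Set.eq_empty_of_isEmpty A
    rw [this, delta_empty])
  have : IsEmpty ↥s := e.toEquiv.symm.isEmpty
  have hs : s = ∅ := Set.isEmpty_coe_sort.mp this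
  rwa [hs] at hss

lemma delta_nonneg (hG : IsGeneric m G) {C : Set V} (hC : C.Finite) : 0 ≤ delta m G C := by
  have := (ss_empty m hG).2 C hC (Set.empty_subset C) (Set.subset_univ C)
  rwa [delta_empty] at this

/-! ### basic self-sufficiency lemmas -/

lemma ss_mono_delta {B : Set V} (hB : SelfSuff m G B Set.univ) {E : Set V}
    (hE : E.Finite) (hBE : B ⊆ E) : delta m G B ≤ delta m G E :=
  hB.2 E hE hBE (Set.subset_univ E)

lemma delta_inter_le {D : Set V} (hD : SelfSuff m G D Set.univ) (hDfin : D.Finite)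
    {E : Set V} (hE : E.Finite) : delta m G (E ∩ D) ≤ delta m G E := by
  have h1 := delta_submod m (G := G) hE hDfin
  have h2 := hD.2 (E ∪ D) (hE.union hDfin) Set.subset_union_right (Set.subset_univ _)
  linarith

lemma ss_inter {C D : Set V} (hC : SelfSuff m G C Set.univ) (hCfin : C.Finite)
    (hD : SelfSuff m G D Set.univ) (hDfin : D.Finite) :
    SelfSuff m G (C ∩ D) Set.univ := by
  refine ⟨Set.subset_univ _, fun E hE hCE _ => ?_⟩
  have h1 : E ∩ D ∩ C = C ∩ D := by
    apply Set.Subset.antisymm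
    · rintro x ⟨⟨-, h2⟩, h3⟩; exact ⟨h3, h2⟩
    · intro x hx; exact ⟨⟨hCE hx, hx.2⟩, hx.1⟩
  have h2 : delta m G (E ∩ D ∩ C) ≤ delta m G (E ∩ D) :=
    delta_inter_le m hC hCfin (hE.inter_of_left D)
  have h3 : delta m G (E ∩ D) ≤ delta m G E := delta_inter_le m hD hDfin hE
  rw [h1] at h2
  linarith

/-! ### the closed-set hull `scl` -/

lemma exists_ss_superset (hG : IsGeneric m G) {Q : Set V} (hQ : Q.Finite) :
    ∃ C : Set V, Q ⊆ C ∧ C.Finite ∧ SelfSuff m G C Set.univ := by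
  obtain ⟨F, hFfin, hFmono, hFss, hFuniv⟩ := hG.1
  have hmono : Monotone F := monotone_nat_of_le_succ hFmono
  have key : ∃ n, Q ⊆ F n := by
    refine Set.Finite.induction_on (motive := fun S _ => ∃ n, S ⊆ F n) Q hQ ⟨0, Set.empty_subset _⟩ ?_
    rintro a S - - ⟨n₁, hn₁⟩
    have ha : a ∈ ⋃ n, F n := by rw [hFuniv]; trivial
    obtain ⟨n₂, hn₂⟩ := Set.mem_iUnion.mp ha
    exact ⟨max n₁ n₂, Set.insert_subset (hmono (le_max_right n₁ n₂) hn₂)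
      (hn₁.trans (hmono (le_max_left n₁ n₂)))⟩
  obtain ⟨n, hn⟩ := key
  exact ⟨F n, hn, hFfin n, hFss n⟩

lemma scl_spec (hG : IsGeneric m G) {Q : Set V} (hQ : Q.Finite) :
    Q ⊆ scl m G Q ∧ (scl m G Q).Finite ∧ SelfSuff m G (scl m G Q) Set.univ ∧
      ∀ C : Set V, Q ⊆ C → C.Finite → SelfSuff m G C Set.univ → scl m G Q ⊆ C := by
  obtain ⟨C₁, hC₁Q, hC₁fin, hC₁ss⟩ := exists_ss_superset m hG hQ
  have hTne : ∃ n : ℕ, ∃ C : Set V, (Q ⊆ C ∧ C.Finite ∧ SelfSuff m G C Set.univ) ∧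
      C.ncard = n := ⟨C₁.ncard, C₁, ⟨hC₁Q, hC₁fin, hC₁ss⟩, rfl⟩
  classical
  set n₀ := Nat.find hTne with hn₀
  obtain ⟨Cs, hCs, hCscard⟩ := Nat.find_spec hTne
  have hmin : ∀ D : Set V, Q ⊆ D → D.Finite → SelfSuff m G D Set.univ → Cs ⊆ D := by
    intro D hQD hDfin hDss
    have hintmem : (Q ⊆ Cs ∩ D ∧ (Cs ∩ D).Finite ∧ SelfSuff m G (Cs ∩ D) Set.univ) ∧
        (Cs ∩ D).ncard = (Cs ∩ D).ncard :=
      ⟨⟨Set.subset_inter hCs.1 hQD, hCs.2.1.inter_of_left D,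
        ss_inter m hCs.2.2 hCs.2.1 hDss hDfin⟩, rfl⟩
    have h1 : n₀ ≤ (Cs ∩ D).ncard := Nat.find_min' hTne ⟨Cs ∩ D, hintmem⟩
    have h2 : (Cs ∩ D).ncard ≤ Cs.ncard := Set.ncard_le_ncard Set.inter_subset_left hCs.2.1
    have heq : Cs ∩ D = Cs := Set.eq_of_subset_of_ncard_le Set.inter_subset_left
      (by omega) hCs.2.1
    rw [← heq]
    exact Set.inter_subset_right
  have hscl : scl m G Q = Cs := by
    apply Set.Subset.antisymm
    · exact Set.sInter_subset_of_mem hCs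
    · exact Set.subset_sInter fun D hD => hmin D hD.1 hD.2.1 hD.2.2
  rw [hscl]
  exact ⟨hCs.1, hCs.2.1, hCs.2.2, hmin⟩

lemma scl_sub (hG : IsGeneric m G) {Q : Set V} (hQ : Q.Finite) : Q ⊆ scl m G Q :=
  (scl_spec m hG hQ).1
lemma scl_fin (hG : IsGeneric m G) {Q : Set V} (hQ : Q.Finite) : (scl m G Q).Finite :=
  (scl_spec m hG hQ).2.1
lemma scl_ss (hG : IsGeneric m G) {Q : Set V} (hQ : Q.Finite) :
    SelfSuff m G (scl m G Q) Set.univ := (scl_spec m hG hQ).2.2.1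
lemma scl_min (hG : IsGeneric m G) {Q : Set V} (hQ : Q.Finite) {C : Set V}
    (hQC : Q ⊆ C) (hC : C.Finite) (hCss : SelfSuff m G C Set.univ) : scl m G Q ⊆ C :=
  (scl_spec m hG hQ).2.2.2 C hQC hC hCss

lemma scl_mono (hG : IsGeneric m G) {Q Q' : Set V} (hQQ' : Q ⊆ Q') (hQ' : Q'.Finite) :
    scl m G Q ⊆ scl m G Q' :=
  scl_min m hG (hQ'.subset hQQ') (hQQ'.trans (scl_sub m hG hQ')) (scl_fin m hG hQ')
    (scl_ss m hG hQ')

lemma scl_eq_self (hG : IsGeneric m G) {Q : Set V} (hQ : Q.Finite)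
    (hQss : SelfSuff m G Q Set.univ) : scl m G Q = Q :=
  Set.Subset.antisymm (scl_min m hG hQ subset_rfl hQ hQss) (scl_sub m hG hQ)

/-! ### the dimension function -/

lemma gdim_le (hG : IsGeneric m G) {Q C : Set V} (hQC : Q ⊆ C) (hC : C.Finite) :
    gdim m G Q ≤ delta m G C := by
  classical
  have hQ : Q.Finite := hC.subset hQC
  have hTne : ∃ n : ℕ, ∃ D : Set V, (Q ⊆ D ∧ D.Finite) ∧ delta m G D = (n : ℤ) :=
    ⟨(delta m G C).toNat, C, ⟨hQC, hC⟩, (Int.toNat_of_nonneg (delta_nonneg m hG hC)).symm⟩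
  set n₀ := Nat.find hTne with hn₀def
  obtain ⟨D₀, hD₀, hD₀delta⟩ := Nat.find_spec hTne
  have hD₀ss : SelfSuff m G D₀ Set.univ := by
    refine ⟨Set.subset_univ _, fun E hE hDE _ => ?_⟩
    have h1 : n₀ ≤ (delta m G E).toNat :=
      Nat.find_min' hTne ⟨E, ⟨hD₀.1.trans hDE, hE⟩,
        (Int.toNat_of_nonneg (delta_nonneg m hG hE)).symm⟩
    have h2 : (n₀ : ℤ) ≤ delta m G E := by
      have := Int.toNat_of_nonneg (delta_nonneg m hG hE)
      omega
    rw [hD₀delta]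
    exact h2
  have hsclD : scl m G Q ⊆ D₀ := scl_min m hG hQ hD₀.1 hD₀.2 hD₀ss
  have h3 : gdim m G Q ≤ delta m G D₀ :=
    ss_mono_delta m (scl_ss m hG hQ) hD₀.2 hsclD
  have h4 : n₀ ≤ (delta m G C).toNat := Nat.find_min' hTne ⟨C, ⟨hQC, hC⟩,
    (Int.toNat_of_nonneg (delta_nonneg m hG hC)).symm⟩
  have h5 : (n₀ : ℤ) ≤ delta m G C := by
    have := Int.toNat_of_nonneg (delta_nonneg m hG hC)
    omega
  rw [hD₀delta] at h3
  linarith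

lemma gdim_eq_delta_scl (Q : Set V) : gdim m G Q = delta m G (scl m G Q) := rfl

lemma gdim_mono (hG : IsGeneric m G) {Q Q' : Set V} (hQQ' : Q ⊆ Q') (hQ' : Q'.Finite) :
    gdim m G Q ≤ gdim m G Q' :=
  gdim_le m hG (hQQ'.trans (scl_sub m hG hQ')) (scl_fin m hG hQ')

lemma gdim_exchange (hG : IsGeneric m G) {B B' : Set V} (v : V) (hBB' : B ⊆ B')
    (hB' : B'.Finite) (h : gdim m G (B ∪ {v}) = gdim m G B) :
    gdim m G (B' ∪ {v}) = gdim m G B' := by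
  have hB : B.Finite := hB'.subset hBB'
  have hBv : (B ∪ {v} : Set V).Finite := hB.union (Set.finite_singleton v)
  apply le_antisymm
  · set S1 := scl m G B' with hS1
    set S2 := scl m G (B ∪ {v}) with hS2
    have hS1fin := scl_fin m hG hB'
    have hS2fin := scl_fin m hG hBv
    have h1 : gdim m G (B' ∪ {v}) ≤ delta m G (S1 ∪ S2) := by
      apply gdim_le m hG _ (hS1fin.union hS2fin)
      apply Set.union_subset ((scl_sub m hG hB').trans Set.subset_union_left)
      intro x hx
      exact Or.inr (scl_sub m hG hBv (Or.inr hx))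
    have h2 := delta_submod m (G := G) hS1fin hS2fin
    have h3 : gdim m G B ≤ delta m G (S1 ∩ S2) := by
      apply gdim_le m hG _ (hS1fin.inter_of_left _)
      exact Set.subset_inter (hBB'.trans (scl_sub m hG hB'))
        ((Set.subset_union_left).trans (scl_sub m hG hBv))
    have h4 : delta m G S1 = gdim m G B' := rfl
    have h5 : delta m G S2 = gdim m G (B ∪ {v}) := rfl
    rw [h] at h5
    linarith
  · exact gdim_mono m hG Set.subset_union_left (hB'.union (Set.finite_singleton v))

/-! ### the geometric closure `gcl` -/

lemma subset_gcl (S : Set V) : S ⊆ gcl m G S := by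
  intro v hv
  exact ⟨{v}, Set.singleton_subset_iff.mpr hv, Set.finite_singleton v, by
    rw [Set.union_self]⟩

lemma mem_gcl_iff (hG : IsGeneric m G) {S : Set V} (hS : S.Finite) {v : V} :
    v ∈ gcl m G S ↔ gdim m G (S ∪ {v}) = gdim m G S := by
  constructor
  · rintro ⟨A', hA'S, hA'fin, h⟩
    exact gdim_exchange m hG v hA'S hS h
  · intro h
    exact ⟨S, subset_rfl, hS, h⟩

lemma gdim_union_gcl (hG : IsGeneric m G) {A₀ : Set V} (hA₀ : A₀.Finite) {S : Set V}
    (hS : S.Finite) (hSX : S ⊆ gcl m G A₀) : gdim m G (A₀ ∪ S) = gdim m G A₀ := by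
  revert hSX
  refine Set.Finite.induction_on
    (motive := fun S _ => S ⊆ gcl m G A₀ → gdim m G (A₀ ∪ S) = gdim m G A₀) S hS ?_ ?_
  · intro _; rw [Set.union_empty]
  · rintro a S haS hSfin IH hSX
    have hsub : S ⊆ gcl m G A₀ := (Set.subset_insert a S).trans hSX
    have ha : a ∈ gcl m G A₀ := hSX (Set.mem_insert a S)
    have h1 : gdim m G (A₀ ∪ {a}) = gdim m G A₀ := (mem_gcl_iff m hG hA₀).mp ha
    have h2 := gdim_exchange m hG a (Set.subset_union_left (s := A₀) (t := S))
      (hA₀.union hSfin) h1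
    have h3 : A₀ ∪ insert a S = (A₀ ∪ S) ∪ {a} := by
      ext x
      simp only [Set.mem_union, Set.mem_insert_iff, Set.mem_singleton_iff]
      tauto
    rw [h3, h2, IH hsub]

lemma scl_subset_gcl (hG : IsGeneric m G) {A₀ : Set V} (hA₀ : A₀.Finite) {Z : Set V}
    (hZ : Z.Finite) (hZX : Z ⊆ gcl m G A₀) : scl m G Z ⊆ gcl m G A₀ := by
  intro w hw
  have hw2 : w ∈ scl m G (A₀ ∪ Z) :=
    scl_mono m hG (Set.subset_union_right) (hA₀.union hZ) hw
  rw [mem_gcl_iff m hG hA₀]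
  apply le_antisymm
  · have h1 : gdim m G (A₀ ∪ {w}) ≤ delta m G (scl m G (A₀ ∪ Z)) := by
      apply gdim_le m hG _ (scl_fin m hG (hA₀.union hZ))
      apply Set.union_subset
      · exact (Set.subset_union_left).trans (scl_sub m hG (hA₀.union hZ))
      · exact Set.singleton_subset_iff.mpr hw2
    have h2 : delta m G (scl m G (A₀ ∪ Z)) = gdim m G (A₀ ∪ Z) := rfl
    rw [h2, gdim_union_gcl m hG hA₀ hZ hZX] at h1
    exact h1
  · exact gdim_mono m hG Set.subset_union_left (hA₀.union (Set.finite_singleton w))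

lemma inter_gcl_eq_scl (hG : IsGeneric m G) {A₀ : Set V} (hA₀ : A₀.Finite) {B : Set V}
    (hBfin : B.Finite) (hBss : SelfSuff m G B Set.univ) :
    scl m G (B ∩ gcl m G A₀) = B ∩ gcl m G A₀ := by
  have hYfin : (B ∩ gcl m G A₀).Finite := hBfin.inter_of_left _
  apply Set.Subset.antisymm
  · apply Set.subset_inter
    · have := scl_mono m hG (Set.inter_subset_left (s := B) (t := gcl m G A₀)) hBfin
      rwa [scl_eq_self m hG hBfin hBss] at this
    · exact scl_subset_gcl m hG hA₀ hYfin Set.inter_subset_right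
  · exact scl_sub m hG hYfin

lemma inter_gcl_ss (hG : IsGeneric m G) {A₀ : Set V} (hA₀ : A₀.Finite) {B : Set V}
    (hBfin : B.Finite) (hBss : SelfSuff m G B Set.univ) :
    SelfSuff m G (B ∩ gcl m G A₀) Set.univ := by
  have := scl_ss m hG (hBfin.inter_of_left (gcl m G A₀))
  rwa [inter_gcl_eq_scl m hG hA₀ hBfin hBss] at this

lemma delta_ss_sub_gcl (hG : IsGeneric m G) {A₀ : Set V} (hA₀ : A₀.Finite) {Y : Set V}
    (hYfin : Y.Finite) (hYss : SelfSuff m G Y Set.univ) (hA₀Y : A₀ ⊆ Y)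
    (hYX : Y ⊆ gcl m G A₀) : delta m G Y = gdim m G A₀ := by
  have h1 : delta m G Y = gdim m G Y := by
    rw [gdim_eq_delta_scl, scl_eq_self m hG hYfin hYss]
  have h2 : A₀ ∪ Y = Y := Set.union_eq_self_of_subset_left hA₀Y
  rw [h1, ← h2, gdim_union_gcl m hG hA₀ hYfin hYX]

/-! ### equivariance under automorphisms -/

/-- image of a set of vertices under an automorphism -/
def aimg (σ : G ≃g G) (S : Set V) : Set V := (fun v => σ v) '' S

lemma aimg_mono (σ : G ≃g G) {S T : Set V} (h : S ⊆ T) : aimg σ S ⊆ aimg σ T :=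
  Set.image_mono h

lemma aimg_finite (σ : G ≃g G) {S : Set V} (h : S.Finite) : (aimg σ S).Finite :=
  h.image _

lemma aimg_symm_aimg (σ : G ≃g G) (S : Set V) : aimg σ.symm (aimg σ S) = S := by
  unfold aimg
  rw [← Set.image_comp]
  convert Set.image_id S
  simp

lemma aimg_aimg_symm (σ : G ≃g G) (S : Set V) : aimg σ (aimg σ.symm S) = S := by
  have := aimg_symm_aimg σ.symm S
  simpa using this

lemma mem_aimg (σ : G ≃g G) {S : Set V} {v : V} (hv : v ∈ S) : σ v ∈ aimg σ S :=
  Set.mem_image_of_mem _ hv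

lemma aimg_union (σ : G ≃g G) (S T : Set V) :
    aimg σ (S ∪ T) = aimg σ S ∪ aimg σ T := Set.image_union _ S T

lemma aimg_singleton (σ : G ≃g G) (v : V) : aimg σ {v} = {σ v} :=
  Set.image_singleton

lemma aimg_inter (σ : G ≃g G) (S T : Set V) :
    aimg σ (S ∩ T) = aimg σ S ∩ aimg σ T :=
  Set.image_inter σ.toEquiv.injective

lemma delta_aimg (σ : G ≃g G) (S : Set V) : delta m G (aimg σ S) = delta m G S := by
  have hinj : Function.Injective (fun v => σ v : V → V) := σ.toEquiv.injective
  have hncard : (aimg σ S).ncard = S.ncard := Set.ncard_image_of_injective S hinj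
  have hpset : pset G (aimg σ S) = Prod.map (fun v => σ v) (fun v => σ v) '' pset G S := by
    ext ⟨u, v⟩
    constructor
    · rintro ⟨⟨a, ha, hau⟩, ⟨b, hb, hbv⟩, hadj⟩
      have hau' : σ a = u := hau
      have hbv' : σ b = v := hbv
      refine ⟨(a, b), ⟨ha, hb, ?_⟩, by simp [Prod.map, hau', hbv']⟩
      have : G.Adj (σ a) (σ b) := by rwa [hau', hbv']
      exact σ.map_adj_iff.mp this
    · rintro ⟨⟨a, b⟩, ⟨ha, hb, hadj⟩, heq⟩
      obtain ⟨h1, h2⟩ : σ a = u ∧ σ b = v := by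
        constructor
        · exact congrArg Prod.fst heq
        · exact congrArg Prod.snd heq
      exact ⟨⟨a, ha, h1⟩, ⟨b, hb, h2⟩, by rw [← h1, ← h2]; exact σ.map_adj_iff.mpr hadj⟩
  have hpinj : Function.Injective (Prod.map (fun v => σ v) (fun v => σ v) : V × V → V × V) :=
    Function.Injective.prodMap hinj hinj
  have hpcard : (pset G (aimg σ S)).ncard = (pset G S).ncard := by
    rw [hpset]
    exact Set.ncard_image_of_injective _ hpinj
  unfold delta edgeCount
  show (m : ℤ) * (aimg σ S).ncard - ((pset G (aimg σ S)).ncard / 2 : ℕ) =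
    (m : ℤ) * S.ncard - ((pset G S).ncard / 2 : ℕ)
  rw [hncard, hpcard]

lemma ss_aimg (σ : G ≃g G) {S : Set V} (hS : S.Finite) (hss : SelfSuff m G S Set.univ) :
    SelfSuff m G (aimg σ S) Set.univ := by
  refine ⟨Set.subset_univ _, fun E hE hSE _ => ?_⟩
  have h1 : S ⊆ aimg σ.symm E := by
    rw [← aimg_symm_aimg σ S]
    exact aimg_mono σ.symm hSE
  have h2 : delta m G S ≤ delta m G (aimg σ.symm E) :=
    hss.2 _ (aimg_finite σ.symm hE) h1 (Set.subset_univ _)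
  have h3 : delta m G (aimg σ.symm E) = delta m G E := by
    have := delta_aimg m σ (aimg σ.symm E)
    rw [aimg_aimg_symm] at this
    exact this.symm
  rw [delta_aimg m σ S]
  linarith

lemma scl_aimg (hG : IsGeneric m G) (σ : G ≃g G) {Q : Set V} (hQ : Q.Finite) :
    scl m G (aimg σ Q) = aimg σ (scl m G Q) := by
  have haux : ∀ (τ : G ≃g G) (R : Set V), R.Finite →
      scl m G (aimg τ R) ⊆ aimg τ (scl m G R) := by
    intro τ R hR
    exact scl_min m hG (aimg_finite τ hR) (aimg_mono τ (scl_sub m hG hR))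
      (aimg_finite τ (scl_fin m hG hR)) (ss_aimg m τ (scl_fin m hG hR) (scl_ss m hG hR))
  apply Set.Subset.antisymm (haux σ Q hQ)
  have h2 := haux σ.symm (aimg σ Q) (aimg_finite σ hQ)
  rw [aimg_symm_aimg] at h2
  have h3 := aimg_mono σ h2
  rwa [aimg_aimg_symm] at h3

lemma gdim_aimg (hG : IsGeneric m G) (σ : G ≃g G) {Q : Set V} (hQ : Q.Finite) :
    gdim m G (aimg σ Q) = gdim m G Q := by
  show delta m G (scl m G (aimg σ Q)) = delta m G (scl m G Q)
  rw [scl_aimg m hG σ hQ, delta_aimg]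

lemma gcl_aimg (hG : IsGeneric m G) (σ : G ≃g G) (S : Set V) :
    gcl m G (aimg σ S) = aimg σ (gcl m G S) := by
  have haux : ∀ (τ : G ≃g G) (R : Set V), aimg τ (gcl m G R) ⊆ gcl m G (aimg τ R) := by
    rintro τ R v ⟨w, ⟨A', hA'R, hA'fin, h⟩, hwv⟩
    refine ⟨aimg τ A', aimg_mono τ hA'R, aimg_finite τ hA'fin, ?_⟩
    have hwv' : τ w = v := hwv
    have h1 : aimg τ A' ∪ {v} = aimg τ (A' ∪ {w}) := by
      rw [aimg_union, aimg_singleton, hwv']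
    rw [h1, gdim_aimg m hG τ (hA'fin.union (Set.finite_singleton w)),
      gdim_aimg m hG τ hA'fin, h]
  apply Set.Subset.antisymm _ (haux σ S)
  have h2 := haux σ.symm (aimg σ S)
  rw [aimg_symm_aimg] at h2
  intro v hv
  have h5 : σ.symm v ∈ gcl m G S := h2 (mem_aimg σ.symm hv)
  exact ⟨σ.symm v, h5, σ.apply_symm_apply v⟩

/-! ### automorphisms of the induced graph on a set `X` -/

section gimgsec

variable {X : Set V} (g₀ : G.induce X ≃g G.induce X)

open Classical in
/-- extension of `g₀` to a vertex map (identity off `X`) -/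
noncomputable def fimg : V → V := fun z => if h : z ∈ X then (g₀ ⟨z, h⟩ : V) else z

/-- image of a subset of `X` under `g₀` -/
noncomputable def gimg (Z : Set V) : Set V := fimg g₀ '' Z

lemma fimg_mem {z : V} (hz : z ∈ X) : fimg g₀ z = (g₀ ⟨z, hz⟩ : V) := by
  unfold fimg
  rw [dif_pos hz]

lemma fimg_mem_X {z : V} (hz : z ∈ X) : fimg g₀ z ∈ X := by
  rw [fimg_mem g₀ hz]
  exact (g₀ ⟨z, hz⟩).2

lemma fimg_symm_fimg {z : V} (hz : z ∈ X) : fimg g₀.symm (fimg g₀ z) = z := by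
  rw [fimg_mem g₀ hz, fimg_mem g₀.symm (g₀ ⟨z, hz⟩).2]
  have : (⟨(g₀ ⟨z, hz⟩ : V), (g₀ ⟨z, hz⟩).2⟩ : ↥X) = g₀ ⟨z, hz⟩ := rfl
  rw [this]
  rw [show g₀.symm (g₀ ⟨z, hz⟩) = ⟨z, hz⟩ from g₀.symm_apply_apply _]

lemma fimg_injOn : Set.InjOn (fimg g₀) X := by
  intro a ha b hb h
  rw [fimg_mem g₀ ha, fimg_mem g₀ hb] at h
  have : g₀ ⟨a, ha⟩ = g₀ ⟨b, hb⟩ := Subtype.ext h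
  have := g₀.toEquiv.injective this
  exact congrArg Subtype.val this

lemma fimg_adj {a b : V} (ha : a ∈ X) (hb : b ∈ X) :
    G.Adj (fimg g₀ a) (fimg g₀ b) ↔ G.Adj a b := by
  rw [fimg_mem g₀ ha, fimg_mem g₀ hb]
  have h1 : G.Adj (g₀ ⟨a, ha⟩ : V) (g₀ ⟨b, hb⟩ : V) ↔
      (G.induce X).Adj (g₀ ⟨a, ha⟩) (g₀ ⟨b, hb⟩) := Iff.rfl
  rw [h1, g₀.map_adj_iff]
  exact Iff.rfl

lemma gimg_subset_X {Z : Set V} (hZ : Z ⊆ X) : gimg g₀ Z ⊆ X := by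
  rintro v ⟨z, hz, rfl⟩
  exact fimg_mem_X g₀ (hZ hz)

lemma gimg_mono {Z Z' : Set V} (h : Z ⊆ Z') : gimg g₀ Z ⊆ gimg g₀ Z' :=
  Set.image_mono h

lemma gimg_finite {Z : Set V} (h : Z.Finite) : (gimg g₀ Z).Finite := h.image _

lemma gimg_union (Z Z' : Set V) : gimg g₀ (Z ∪ Z') = gimg g₀ Z ∪ gimg g₀ Z' :=
  Set.image_union _ _ _

lemma gimg_singleton (z : V) : gimg g₀ {z} = {fimg g₀ z} := Set.image_singleton

lemma gimg_symm_gimg {Z : Set V} (hZ : Z ⊆ X) : gimg g₀.symm (gimg g₀ Z) = Z := by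
  unfold gimg
  rw [← Set.image_comp]
  apply Set.Subset.antisymm
  · rintro v ⟨z, hz, rfl⟩
    show fimg g₀.symm (fimg g₀ z) ∈ Z
    rw [fimg_symm_fimg g₀ (hZ hz)]
    exact hz
  · intro z hz
    exact ⟨z, hz, fimg_symm_fimg g₀ (hZ hz)⟩

lemma delta_gimg {Z : Set V} (hZ : Z ⊆ X) : delta m G (gimg g₀ Z) = delta m G Z := by
  have hinjZ : Set.InjOn (fimg g₀) Z := (fimg_injOn g₀).mono hZ
  have hncard : (gimg g₀ Z).ncard = Z.ncard := Set.ncard_image_of_injOn hinjZ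
  have hpset : pset G (gimg g₀ Z) = Prod.map (fimg g₀) (fimg g₀) '' pset G Z := by
    ext ⟨u, v⟩
    constructor
    · rintro ⟨⟨a, ha, hau⟩, ⟨b, hb, hbv⟩, hadj⟩
      have hau' : fimg g₀ a = u := hau
      have hbv' : fimg g₀ b = v := hbv
      refine ⟨(a, b), ⟨ha, hb, ?_⟩, by simp [Prod.map, hau', hbv']⟩
      have : G.Adj (fimg g₀ a) (fimg g₀ b) := by rwa [hau', hbv']
      exact (fimg_adj g₀ (hZ ha) (hZ hb)).mp this
    · rintro ⟨⟨a, b⟩, ⟨ha, hb, hadj⟩, heq⟩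
      have h1 : fimg g₀ a = u := congrArg Prod.fst heq
      have h2 : fimg g₀ b = v := congrArg Prod.snd heq
      refine ⟨⟨a, ha, h1⟩, ⟨b, hb, h2⟩, ?_⟩
      rw [← h1, ← h2]
      exact (fimg_adj g₀ (hZ ha) (hZ hb)).mpr hadj
  have hpinj : Set.InjOn (Prod.map (fimg g₀) (fimg g₀)) (pset G Z) := by
    rintro ⟨a, b⟩ ⟨ha, hb, -⟩ ⟨c, d⟩ ⟨hc, hd, -⟩ h
    have h1 : fimg g₀ a = fimg g₀ c := congrArg Prod.fst h
    have h2 : fimg g₀ b = fimg g₀ d := congrArg Prod.snd h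
    have e1 := (fimg_injOn g₀) (hZ ha) (hZ hc) h1
    have e2 := (fimg_injOn g₀) (hZ hb) (hZ hd) h2
    rw [Prod.ext_iff]
    exact ⟨e1, e2⟩
  have hpcard : (pset G (gimg g₀ Z)).ncard = (pset G Z).ncard := by
    rw [hpset]
    exact Set.ncard_image_of_injOn hpinj
  unfold delta edgeCount
  show (m : ℤ) * (gimg g₀ Z).ncard - ((pset G (gimg g₀ Z)).ncard / 2 : ℕ) =
    (m : ℤ) * Z.ncard - ((pset G Z).ncard / 2 : ℕ)
  rw [hncard, hpcard]

variable (hG : IsGeneric m G) {A₀ : Set V} (hA₀ : A₀.Finite) (hA₀X : A₀ ⊆ X)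
  (hXcl : gcl m G A₀ = X)

include hG hA₀ hXcl

lemma scl_sub_X {Z : Set V} (hZfin : Z.Finite) (hZ : Z ⊆ X) : scl m G Z ⊆ X := by
  rw [← hXcl] at hZ ⊢
  exact scl_subset_gcl m hG hA₀ hZfin hZ

lemma gdim_gimg_le {Z : Set V} (hZfin : Z.Finite) (hZ : Z ⊆ X) :
    gdim m G (gimg g₀ Z) ≤ gdim m G Z := by
  have hsclX : scl m G Z ⊆ X := scl_sub_X m hG hA₀ hXcl hZfin hZ
  have h1 : gdim m G (gimg g₀ Z) ≤ delta m G (gimg g₀ (scl m G Z)) :=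
    gdim_le m hG (gimg_mono g₀ (scl_sub m hG hZfin)) (gimg_finite g₀ (scl_fin m hG hZfin))
  rw [delta_gimg m g₀ hsclX] at h1
  exact h1

lemma gdim_gimg {Z : Set V} (hZfin : Z.Finite) (hZ : Z ⊆ X) :
    gdim m G (gimg g₀ Z) = gdim m G Z := by
  apply le_antisymm (gdim_gimg_le m g₀ hG hA₀ hXcl hZfin hZ)
  have h2 := gdim_gimg_le m g₀.symm hG hA₀ hXcl (gimg_finite g₀ hZfin) (gimg_subset_X g₀ hZ)
  rwa [gimg_symm_gimg g₀ hZ] at h2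

lemma ss_gimg {Z : Set V} (hZfin : Z.Finite) (hZ : Z ⊆ X)
    (hZss : SelfSuff m G Z Set.univ) : SelfSuff m G (gimg g₀ Z) Set.univ := by
  refine ⟨Set.subset_univ _, fun E hE hZE _ => ?_⟩
  have h1 : gdim m G (gimg g₀ Z) ≤ delta m G E := gdim_le m hG hZE hE
  have h2 : gdim m G (gimg g₀ Z) = gdim m G Z := gdim_gimg m g₀ hG hA₀ hXcl hZfin hZ
  have h3 : gdim m G Z = delta m G Z := by
    rw [gdim_eq_delta_scl, scl_eq_self m hG hZfin hZss]
  have h4 : delta m G (gimg g₀ Z) = delta m G Z := delta_gimg m g₀ hZ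
  linarith

include hA₀X in
lemma gcl_gimg_base : gcl m G (gimg g₀ A₀) = gcl m G A₀ := by
  have hA₁fin : (gimg g₀ A₀).Finite := gimg_finite g₀ hA₀
  have hA₁X : gimg g₀ A₀ ⊆ X := gimg_subset_X g₀ hA₀X
  apply Set.Subset.antisymm
  · intro v hv
    have h1 : gdim m G (gimg g₀ A₀ ∪ {v}) = gdim m G (gimg g₀ A₀) :=
      (mem_gcl_iff m hG hA₁fin).mp hv
    have h2 : gimg g₀ A₀ ⊆ gcl m G A₀ := by rw [hXcl]; exact hA₁X
    have h3 : gdim m G (A₀ ∪ gimg g₀ A₀) = gdim m G A₀ :=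
      gdim_union_gcl m hG hA₀ hA₁fin h2
    have h4 : gdim m G ((A₀ ∪ gimg g₀ A₀) ∪ {v}) = gdim m G (A₀ ∪ gimg g₀ A₀) :=
      gdim_exchange m hG v Set.subset_union_right (hA₀.union hA₁fin) h1
    rw [mem_gcl_iff m hG hA₀]
    apply le_antisymm
    · calc gdim m G (A₀ ∪ {v}) ≤ gdim m G ((A₀ ∪ gimg g₀ A₀) ∪ {v}) := by
            apply gdim_mono m hG
            · exact Set.union_subset_union_left _ Set.subset_union_left
            · exact (hA₀.union hA₁fin).union (Set.finite_singleton v)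
        _ = gdim m G A₀ := by rw [h4, h3]
    · exact gdim_mono m hG Set.subset_union_left (hA₀.union (Set.finite_singleton v))
  · intro v hv
    have hvX : v ∈ X := by rw [← hXcl]; exact hv
    set w : V := (g₀.symm ⟨v, hvX⟩ : V) with hwdef
    have hwX : w ∈ X := (g₀.symm ⟨v, hvX⟩).2
    have hfw : fimg g₀ w = v := by
      rw [fimg_mem g₀ hwX]
      have : (⟨w, hwX⟩ : ↥X) = g₀.symm ⟨v, hvX⟩ := rfl
      rw [this, show g₀ (g₀.symm ⟨v, hvX⟩) = ⟨v, hvX⟩ from g₀.apply_symm_apply _]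
    have hw : w ∈ gcl m G A₀ := by rw [hXcl]; exact hwX
    have h1 : gdim m G (A₀ ∪ {w}) = gdim m G A₀ := (mem_gcl_iff m hG hA₀).mp hw
    refine ⟨gimg g₀ A₀, subset_rfl, hA₁fin, ?_⟩
    have h2 : gimg g₀ A₀ ∪ {v} = gimg g₀ (A₀ ∪ {w}) := by
      rw [gimg_union, gimg_singleton, hfw]
    rw [h2, gdim_gimg m g₀ hG hA₀ hXcl (hA₀.union (Set.finite_singleton w))
      (Set.union_subset hA₀X (Set.singleton_subset_iff.mpr hwX)),
      gdim_gimg m g₀ hG hA₀ hXcl hA₀ hA₀X, h1]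

end gimgsec

/-! ### the key no-cross-edge lemma -/

lemma key_nocross (hG : IsGeneric m G) {A₀ : Set V} (hA₀ : A₀.Finite) {B : Set V}
    (hBfin : B.Finite) (hBss : SelfSuff m G B Set.univ) (hA₀B : A₀ ⊆ B)
    {w z : V} (hw : w ∈ B) (hwX : w ∉ gcl m G A₀) (hz : z ∈ gcl m G A₀) (hzB : z ∉ B) :
    ¬ G.Adj w z := by
  intro hadj
  set X := gcl m G A₀ with hXdef
  set Y := B ∩ X with hYdef
  have hA₀X : A₀ ⊆ X := subset_gcl m A₀
  have hA₀Y : A₀ ⊆ Y := Set.subset_inter hA₀B hA₀X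
  have hYfin : Y.Finite := hBfin.inter_of_left _
  have hYX : Y ⊆ X := Set.inter_subset_right
  have hYss : SelfSuff m G Y Set.univ := inter_gcl_ss m hG hA₀ hBfin hBss
  have hYzX : Y ∪ {z} ⊆ X := Set.union_subset hYX (Set.singleton_subset_iff.mpr hz)
  have hYzfin : (Y ∪ {z} : Set V).Finite := hYfin.union (Set.finite_singleton z)
  set Z := scl m G (Y ∪ {z}) with hZdef
  have hZfin : Z.Finite := scl_fin m hG hYzfin
  have hZX : Z ⊆ X := scl_subset_gcl m hG hA₀ hYzfin hYzX
  have hzZ : z ∈ Z := scl_sub m hG hYzfin (Or.inr rfl)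
  have hYZ : Y ⊆ Z := (Set.subset_union_left).trans (scl_sub m hG hYzfin)
  have hBZ : B ∩ Z = Y := by
    apply Set.Subset.antisymm
    · intro x hx
      exact ⟨hx.1, hZX hx.2⟩
    · intro x hx
      exact ⟨hx.1, hYZ hx⟩
  -- the strict submodularity from the cross edge
  have hwBZ : w ∈ B \ Z := ⟨hw, fun h => hwX (hZX h)⟩
  have hzZB : z ∈ Z \ B := ⟨hzZ, hzB⟩
  have hstrict := delta_union_lt m (G := G) hBfin hZfin hwBZ hzZB hadj
  rw [hBZ] at hstrict
  -- δ(Z) = gdim A₀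
  have hZdelta : delta m G Z = gdim m G A₀ := by
    have h1 : delta m G Z = gdim m G (Y ∪ {z}) := rfl
    rw [h1, ← Set.union_eq_self_of_subset_left hA₀Y]
    show gdim m G ((A₀ ∪ Y) ∪ {z}) = gdim m G A₀
    rw [Set.union_assoc]
    exact gdim_union_gcl m hG hA₀ (hYfin.union (Set.finite_singleton z))
      (Set.union_subset hYX (Set.singleton_subset_iff.mpr hz))
  -- δ(Y) = gdim A₀
  have hYdelta : delta m G Y = gdim m G A₀ :=
    delta_ss_sub_gcl m hG hA₀ hYfin hYss hA₀Y hYX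
  -- B self-sufficient
  have hBss2 : delta m G B ≤ delta m G (B ∪ Z) :=
    hBss.2 (B ∪ Z) (hBfin.union hZfin) Set.subset_union_left (Set.subset_univ _)
  linarith

/-! ### the forward extension step -/

lemma forward_step (hG : IsGeneric m G) {X A₀ : Set V} (hA₀ : A₀.Finite) (hA₀X : A₀ ⊆ X)
    (hXcl : gcl m G A₀ = X) (g₀ : G.induce X ≃g G.induce X)
    (γ : G ≃g G) {B : Set V} (hBfin : B.Finite) (hBss : SelfSuff m G B Set.univ)
    (hA₀B : A₀ ⊆ B)
    (hInv : ∀ v ∈ B ∩ X, γ v = fimg g₀ v) (u : V) :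
    ∃ (γ' : G ≃g G) (B' : Set V), B'.Finite ∧ SelfSuff m G B' Set.univ ∧ A₀ ⊆ B' ∧
      B ⊆ B' ∧ u ∈ B' ∧ (∀ b ∈ B, γ' b = γ b) ∧ (∀ v ∈ B' ∩ X, γ' v = fimg g₀ v) := by
  classical
  -- the transported base
  set A₁ : Set V := gimg g₀ A₀ with hA₁def
  have hA₁fin : A₁.Finite := gimg_finite g₀ hA₀
  have hA₁X : A₁ ⊆ X := gimg_subset_X g₀ hA₀X
  have hA₁cl : gcl m G A₁ = X := by
    rw [hA₁def, gcl_gimg_base m g₀ hG hA₀ hA₀X hXcl, hXcl]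
  -- γ transports A₀ to A₁ and fixes X setwise
  have hγA₀ : aimg γ A₀ = A₁ := by
    show (fun v => γ v) '' A₀ = fimg g₀ '' A₀
    apply Set.image_congr
    intro a ha
    exact hInv a ⟨hA₀B ha, hA₀X ha⟩
  have hγX : aimg γ X = X := by
    rw [← hXcl, ← gcl_aimg m hG γ A₀, hγA₀, hA₁cl, hXcl]
  have hmemγX : ∀ v : V, γ v ∈ X ↔ v ∈ X := by
    intro v
    constructor
    · intro h
      rw [← hγX] at h
      obtain ⟨w, hw, hwv⟩ := h
      have : w = v := γ.toEquiv.injective hwv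
      rwa [← this]
    · intro h
      rw [← hγX]
      exact mem_aimg γ h
  -- the enlarged domain
  set B' : Set V := scl m G (B ∪ {u}) with hB'def
  have hBufin : (B ∪ {u} : Set V).Finite := hBfin.union (Set.finite_singleton u)
  have hB'fin : B'.Finite := scl_fin m hG hBufin
  have hB'ss : SelfSuff m G B' Set.univ := scl_ss m hG hBufin
  have hBB' : B ⊆ B' := (Set.subset_union_left).trans (scl_sub m hG hBufin)
  have huB' : u ∈ B' := scl_sub m hG hBufin (Or.inr rfl)
  have hA₀B' : A₀ ⊆ B' := hA₀B.trans hBB'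
  set Y : Set V := B ∩ X with hYdef
  set Y' : Set V := B' ∩ X with hY'def
  have hYY' : Y ⊆ Y' := Set.inter_subset_inter_left X hBB'
  have hYX : Y ⊆ X := Set.inter_subset_right
  have hY'X : Y' ⊆ X := Set.inter_subset_right
  have hYfin : Y.Finite := hBfin.inter_of_left X
  have hY'fin : Y'.Finite := hB'fin.inter_of_left X
  have hYss : SelfSuff m G Y Set.univ := by
    have := inter_gcl_ss m hG hA₀ hBfin hBss
    rwa [hXcl] at this
  have hY'ss : SelfSuff m G Y' Set.univ := by
    have := inter_gcl_ss m hG hA₀ hB'fin hB'ss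
    rwa [hXcl] at this
  have hA₀Y : A₀ ⊆ Y := Set.subset_inter hA₀B hA₀X
  have hA₀Y' : A₀ ⊆ Y' := Set.subset_inter hA₀B' hA₀X
  have hYdelta : delta m G Y = gdim m G A₀ := by
    have := delta_ss_sub_gcl m hG hA₀ hYfin hYss hA₀Y
    rw [hXcl] at this
    exact this hYX
  have hY'delta : delta m G Y' = gdim m G A₀ := by
    have := delta_ss_sub_gcl m hG hA₀ hY'fin hY'ss hA₀Y'
    rw [hXcl] at this
    exact this hY'X
  -- no cross edges between B \ X and X \ B
  have hkeyB : ∀ w ∈ B, w ∉ X → ∀ z ∈ X, z ∉ B → ¬ G.Adj w z := by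
    intro w hw hwX z hz hzB
    apply key_nocross m hG hA₀ hBfin hBss hA₀B hw
    · rw [hXcl]; exact hwX
    · rw [hXcl]; exact hz
    · exact hzB
  -- the source side N
  set N : Set V := B ∪ Y' with hNdef
  have hNfin : N.Finite := hBfin.union hY'fin
  have hBY' : B ∩ Y' = Y := by
    apply Set.Subset.antisymm
    · intro x hx
      exact ⟨hx.1, hx.2.2⟩
    · intro x hx
      exact ⟨hx.1, hYY' hx⟩
  have hnocrossN : ∀ b ∈ B \ Y', ∀ y ∈ Y' \ B, ¬ G.Adj b y := by
    rintro b ⟨hbB, hbY'⟩ y ⟨hyY', hyB⟩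
    have hbX : b ∉ X := fun h => hbY' (hYY' ⟨hbB, h⟩)
    exact hkeyB b hbB hbX y (hY'X hyY') hyB
  have hNdelta : delta m G N = delta m G B := by
    have h := delta_union_eq m (G := G) hBfin hY'fin hnocrossN
    rw [hBY'] at h
    rw [hNdef]
    linarith [hYdelta, hY'delta]
  have hNss : SelfSuff m G N Set.univ := by
    refine ⟨Set.subset_univ _, fun E hE hNE _ => ?_⟩
    rw [hNdelta]
    exact hBss.2 E hE ((Set.subset_union_left).trans hNE) (Set.subset_univ _)
  -- the target side C₀
  set γB : Set V := aimg γ B with hγBdef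
  have hγBfin : γB.Finite := aimg_finite γ hBfin
  have hγBss : SelfSuff m G γB Set.univ := ss_aimg m γ hBfin hBss
  have hA₁γB : A₁ ⊆ γB := by
    rw [← hγA₀]
    exact aimg_mono γ hA₀B
  have hγBX : γB ∩ X = gimg g₀ Y := by
    have h1 : γB ∩ X = aimg γ (B ∩ X) := by
      rw [aimg_inter, hγX]
    rw [h1]
    show (fun v => γ v) '' Y = fimg g₀ '' Y
    apply Set.image_congr
    intro y hy
    exact hInv y hy
  set T : Set V := gimg g₀ Y' with hTdef
  have hTX : T ⊆ X := gimg_subset_X g₀ hY'X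
  have hTfin : T.Finite := gimg_finite g₀ hY'fin
  have hgimgYT : gimg g₀ Y ⊆ T := gimg_mono g₀ hYY'
  have hγBT : γB ∩ T = gimg g₀ Y := by
    apply Set.Subset.antisymm
    · intro x hx
      rw [← hγBX]
      exact ⟨hx.1, hTX hx.2⟩
    · intro x hx
      refine ⟨?_, hgimgYT hx⟩
      have : x ∈ γB ∩ X := by rw [hγBX]; exact hx
      exact this.1
  have hkeyγB : ∀ w ∈ γB, w ∉ X → ∀ z ∈ X, z ∉ γB → ¬ G.Adj w z := by
    intro w hw hwX z hz hzγB
    apply key_nocross m hG hA₁fin hγBfin hγBss hA₁γB hw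
    · rw [hA₁cl]; exact hwX
    · rw [hA₁cl]; exact hz
    · exact hzγB
  have hnocrossC : ∀ c ∈ γB \ T, ∀ t ∈ T \ γB, ¬ G.Adj c t := by
    rintro c ⟨hcγB, hcT⟩ t ⟨htT, htγB⟩
    have hcX : c ∉ X := by
      intro h
      apply hcT
      apply hgimgYT
      rw [← hγBX]
      exact ⟨hcγB, h⟩
    exact hkeyγB c hcγB hcX t (hTX htT) htγB
  set C₀ : Set V := γB ∪ T with hC₀def
  have hC₀fin : C₀.Finite := hγBfin.union hTfin
  have hTdelta : delta m G T = delta m G Y' := delta_gimg m g₀ hY'X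
  have hgimgYdelta : delta m G (gimg g₀ Y) = delta m G Y := delta_gimg m g₀ hYX
  have hγBdelta : delta m G γB = delta m G B := delta_aimg m γ B
  have hC₀delta : delta m G C₀ = delta m G γB := by
    have h := delta_union_eq m (G := G) hγBfin hTfin hnocrossC
    rw [hγBT] at h
    rw [hC₀def]
    linarith [hTdelta, hgimgYdelta, hYdelta, hY'delta]
  have hC₀ss : SelfSuff m G C₀ Set.univ := by
    refine ⟨Set.subset_univ _, fun E hE hCE _ => ?_⟩
    rw [hC₀delta]
    exact hγBss.2 E hE ((Set.subset_union_left).trans hCE) (Set.subset_univ _)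
  -- the comparison map
  set f : V → V := fun v => if h : v ∈ X then fimg g₀ v else γ v with hfdef
  have hfX : ∀ v ∈ X, f v = fimg g₀ v := fun v hv => dif_pos hv
  have hfnX : ∀ v, v ∉ X → f v = γ v := fun v hv => dif_neg hv
  have hNX : N ∩ X = Y' := by
    apply Set.Subset.antisymm
    · rintro x ⟨hx1 | hx1, hx2⟩
      · exact hYY' ⟨hx1, hx2⟩
      · exact hx1
    · intro x hx
      exact ⟨Or.inr hx, hx.2⟩
  have hfB : ∀ b ∈ B, f b = γ b := by
    intro b hb
    by_cases h : b ∈ X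
    · rw [hfX b h, ← hInv b ⟨hb, h⟩]
    · exact hfnX b h
  have hmapsto : ∀ v ∈ N, f v ∈ C₀ := by
    intro v hv
    by_cases h : v ∈ X
    · have hvY' : v ∈ Y' := hNX ▸ (⟨hv, h⟩ : v ∈ N ∩ X)
      rw [hfX v h]
      exact Or.inr ⟨v, hvY', rfl⟩
    · have hvB : v ∈ B := by
        rcases hv with hv | hv
        · exact hv
        · exact absurd (hY'X hv) h
      rw [hfnX v h]
      exact Or.inl (mem_aimg γ hvB)
  have hinj : ∀ a ∈ N, ∀ b ∈ N, f a = f b → a = b := by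
    intro a ha b hb hab
    by_cases haX : a ∈ X <;> by_cases hbX : b ∈ X
    · rw [hfX a haX, hfX b hbX] at hab
      exact fimg_injOn g₀ haX hbX hab
    · rw [hfX a haX, hfnX b hbX] at hab
      exfalso
      have h1 : fimg g₀ a ∈ X := fimg_mem_X g₀ haX
      rw [hab] at h1
      exact hbX ((hmemγX b).mp h1)
    · rw [hfnX a haX, hfX b hbX] at hab
      exfalso
      have h1 : fimg g₀ b ∈ X := fimg_mem_X g₀ hbX
      rw [← hab] at h1
      exact haX ((hmemγX a).mp h1)
    · rw [hfnX a haX, hfnX b hbX] at hab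
      exact γ.toEquiv.injective hab
  have hsurj : ∀ c ∈ C₀, ∃ v ∈ N, f v = c := by
    rintro c (⟨b, hb, rfl⟩ | ⟨y, hy, rfl⟩)
    · exact ⟨b, Or.inl hb, hfB b hb⟩
    · exact ⟨y, Or.inr hy, hfX y (hY'X hy)⟩
  have hadj : ∀ a ∈ N, ∀ b ∈ N, (G.Adj (f a) (f b) ↔ G.Adj a b) := by
    have main : ∀ a ∈ N, a ∉ X → ∀ b ∈ N, b ∈ X → (G.Adj (f a) (f b) ↔ G.Adj a b) := by
      intro a ha haX b hb hbX
      have haB : a ∈ B := by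
        rcases ha with h | h
        · exact h
        · exact absurd (hY'X h) haX
      have hbY' : b ∈ Y' := hNX ▸ (⟨hb, hbX⟩ : b ∈ N ∩ X)
      rw [hfnX a haX, hfX b hbX]
      by_cases hbB : b ∈ B
      · rw [← hInv b ⟨hbB, hbX⟩]
        exact γ.map_adj_iff
      · have hrhs : ¬ G.Adj a b := hkeyB a haB haX b hbX hbB
        have hfbX : fimg g₀ b ∈ X := fimg_mem_X g₀ hbX
        have hfbγB : fimg g₀ b ∉ γB := by
          intro h
          have h2 : fimg g₀ b ∈ gimg g₀ Y := by
            rw [← hγBX]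
            exact ⟨h, hfbX⟩
          obtain ⟨y, hy, hyeq⟩ := h2
          have : y = b := fimg_injOn g₀ (hYX hy) hbX hyeq
          rw [this] at hy
          exact hbB hy.1
        have hγaγB : γ a ∈ γB := mem_aimg γ haB
        have hγaX : γ a ∉ X := fun h => haX ((hmemγX a).mp h)
        have hlhs : ¬ G.Adj (γ a) (fimg g₀ b) :=
          hkeyγB (γ a) hγaγB hγaX (fimg g₀ b) hfbX hfbγB
        exact iff_of_false hlhs hrhs
    intro a ha b hb
    by_cases haX : a ∈ X <;> by_cases hbX : b ∈ X
    · rw [hfX a haX, hfX b hbX]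
      exact fimg_adj g₀ haX hbX
    · rw [G.adj_comm (f a) (f b), G.adj_comm a b]
      exact main b hb hbX a ha haX
    · exact main a ha haX b hb hbX
    · rw [hfnX a haX, hfnX b hbX]
      exact γ.map_adj_iff
  -- build the isomorphism between the induced graphs
  have hbij : Function.Bijective (fun x : ↥N => (⟨f ↑x, hmapsto ↑x x.2⟩ : ↥C₀)) := by
    constructor
    · intro a b hab
      have : f ↑a = f ↑b := congrArg Subtype.val hab
      exact Subtype.ext (hinj ↑a a.2 ↑b b.2 this)
    · rintro ⟨c, hc⟩
      obtain ⟨v, hvN, hvc⟩ := hsurj c hc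
      exact ⟨⟨v, hvN⟩, Subtype.ext hvc⟩
  set pe : ↥N ≃ ↥C₀ := Equiv.ofBijective _ hbij with hpedef
  have hpeval : ∀ x : ↥N, (pe x : V) = f ↑x := fun x => rfl
  have hmapiff : ∀ a b : ↥N, (G.induce C₀).Adj (pe a) (pe b) ↔ (G.induce N).Adj a b := by
    intro a b
    show G.Adj (pe a : V) (pe b : V) ↔ G.Adj ↑a ↑b
    rw [hpeval a, hpeval b]
    exact hadj ↑a a.2 ↑b b.2
  set p : G.induce N ≃g G.induce C₀ := ⟨pe, hmapiff _ _⟩ with hpdef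
  obtain ⟨τ, hτ⟩ := hG.2.1 N C₀ hNfin hC₀fin hNss hC₀ss p
  have hτval : ∀ v ∈ N, τ v = f v := by
    intro v hv
    have := hτ ⟨v, hv⟩
    rw [this]
    rfl
  refine ⟨τ, B', hB'fin, hB'ss, hA₀B', hBB', huB', ?_, ?_⟩
  · intro b hb
    rw [hτval b (Or.inl hb)]
    exact hfB b hb
  · intro v hv
    rw [hτval v (Or.inr hv), hfX v hv.2]

/-! ### initial automorphism and invariant transfer -/

lemma init_step (hG : IsGeneric m G) {X A₀ : Set V} (hA₀ : A₀.Finite) (hA₀X : A₀ ⊆ X)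
    (hXcl : gcl m G A₀ = X) (g₀ : G.induce X ≃g G.induce X) :
    ∃ γ₀ : G ≃g G, ∀ v ∈ scl m G A₀, γ₀ v = fimg g₀ v := by
  classical
  set N : Set V := scl m G A₀ with hNdef
  have hNfin : N.Finite := scl_fin m hG hA₀
  have hNss : SelfSuff m G N Set.univ := scl_ss m hG hA₀
  have hNX : N ⊆ X := scl_sub_X m hG hA₀ hXcl hA₀ hA₀X
  set C : Set V := gimg g₀ N with hCdef
  have hCfin : C.Finite := gimg_finite g₀ hNfin
  have hCss : SelfSuff m G C Set.univ := ss_gimg m g₀ hG hA₀ hXcl hNfin hNX hNss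
  have hmapsto : ∀ v ∈ N, fimg g₀ v ∈ C := fun v hv => ⟨v, hv, rfl⟩
  have hbij : Function.Bijective (fun x : ↥N => (⟨fimg g₀ ↑x, hmapsto ↑x x.2⟩ : ↥C)) := by
    constructor
    · intro a b hab
      have : fimg g₀ ↑a = fimg g₀ ↑b := congrArg Subtype.val hab
      exact Subtype.ext (fimg_injOn g₀ (hNX a.2) (hNX b.2) this)
    · rintro ⟨c, ⟨v, hv, rfl⟩⟩
      exact ⟨⟨v, hv⟩, rfl⟩
  set pe : ↥N ≃ ↥C := Equiv.ofBijective _ hbij with hpedef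
  have hmapiff : ∀ a b : ↥N, (G.induce C).Adj (pe a) (pe b) ↔ (G.induce N).Adj a b := by
    intro a b
    show G.Adj (fimg g₀ ↑a) (fimg g₀ ↑b) ↔ G.Adj ↑a ↑b
    exact fimg_adj g₀ (hNX a.2) (hNX b.2)
  set p : G.induce N ≃g G.induce C := ⟨pe, hmapiff _ _⟩ with hpdef
  obtain ⟨τ, hτ⟩ := hG.2.1 N C hNfin hCfin hNss hCss p
  refine ⟨τ, fun v hv => ?_⟩
  have := hτ ⟨v, hv⟩
  rw [this]
  rfl

lemma inv_transfer (hG : IsGeneric m G) {X A₀ : Set V} (hA₀ : A₀.Finite) (hA₀X : A₀ ⊆ X)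
    (hXcl : gcl m G A₀ = X) (g₀ : G.induce X ≃g G.induce X)
    (γ : G ≃g G) {B : Set V} (hBfin : B.Finite) (hBss : SelfSuff m G B Set.univ)
    (hA₀B : A₀ ⊆ B) (hInv : ∀ v ∈ B ∩ X, γ v = fimg g₀ v) :
    (aimg γ B).Finite ∧ SelfSuff m G (aimg γ B) Set.univ ∧ gimg g₀ A₀ ⊆ aimg γ B ∧
      (∀ v ∈ aimg γ B ∩ X, γ.symm v = fimg g₀.symm v) := by
  have hγA₀ : aimg γ A₀ = gimg g₀ A₀ := by
    show (fun v => γ v) '' A₀ = fimg g₀ '' A₀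
    exact Set.image_congr fun a ha => hInv a ⟨hA₀B ha, hA₀X ha⟩
  have hA₁cl : gcl m G (gimg g₀ A₀) = X := by
    rw [gcl_gimg_base m g₀ hG hA₀ hA₀X hXcl, hXcl]
  have hγX : aimg γ X = X := by
    rw [← hXcl, ← gcl_aimg m hG γ A₀, hγA₀, hA₁cl, hXcl]
  have hγBX : aimg γ B ∩ X = gimg g₀ (B ∩ X) := by
    have h1 : aimg γ B ∩ X = aimg γ (B ∩ X) := by rw [aimg_inter, hγX]
    rw [h1]
    show (fun v => γ v) '' (B ∩ X) = fimg g₀ '' (B ∩ X)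
    exact Set.image_congr fun y hy => hInv y hy
  refine ⟨aimg_finite γ hBfin, ss_aimg m γ hBfin hBss, ?_, ?_⟩
  · rw [← hγA₀]
    exact aimg_mono γ hA₀B
  · intro v hv
    rw [hγBX] at hv
    obtain ⟨y, hy, rfl⟩ := hv
    have h2 : γ y = fimg g₀ y := hInv y hy
    rw [fimg_symm_fimg g₀ hy.2, ← h2]
    exact γ.symm_apply_apply y

/-! ### the combined two-sided step -/

lemma full_step (hG : IsGeneric m G) {X A₀ : Set V} (hA₀ : A₀.Finite) (hA₀X : A₀ ⊆ X)
    (hXcl : gcl m G A₀ = X) (g₀ : G.induce X ≃g G.induce X)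
    (γ : G ≃g G) {B : Set V} (hBfin : B.Finite) (hBss : SelfSuff m G B Set.univ)
    (hA₀B : A₀ ⊆ B) (hInv : ∀ v ∈ B ∩ X, γ v = fimg g₀ v) (u : V) :
    ∃ (γ' : G ≃g G) (B' : Set V), B'.Finite ∧ SelfSuff m G B' Set.univ ∧ A₀ ⊆ B' ∧
      B ⊆ B' ∧ (∀ b ∈ B, γ' b = γ b) ∧ u ∈ B' ∧ (∃ w ∈ B', γ' w = u) ∧
      (∀ v ∈ B' ∩ X, γ' v = fimg g₀ v) := by
  obtain ⟨γ₁, B₁, hB₁fin, hB₁ss, hA₀B₁, hBB₁, huB₁, hagree₁, hInv₁⟩ :=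
    forward_step m hG hA₀ hA₀X hXcl g₀ γ hBfin hBss hA₀B hInv u
  -- transfer to the inverse context
  set A₁ : Set V := gimg g₀ A₀ with hA₁def
  have hA₁fin : A₁.Finite := gimg_finite g₀ hA₀
  have hA₁X : A₁ ⊆ X := gimg_subset_X g₀ hA₀X
  have hA₁cl : gcl m G A₁ = X := by
    rw [hA₁def, gcl_gimg_base m g₀ hG hA₀ hA₀X hXcl, hXcl]
  obtain ⟨hC₁fin, hC₁ss, hA₁C₁, hInv₂⟩ :=
    inv_transfer m hG hA₀ hA₀X hXcl g₀ γ₁ hB₁fin hB₁ss hA₀B₁ hInv₁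
  -- backward step
  obtain ⟨ψ, B₂, hB₂fin, hB₂ss, hA₁B₂, hC₁B₂, huB₂, hagree₂, hInv₃⟩ :=
    forward_step m hG hA₁fin hA₁X hA₁cl g₀.symm γ₁.symm hC₁fin hC₁ss hA₁C₁ hInv₂ u
  -- transfer back
  obtain ⟨hB'fin, hB'ss, hA₀'B', hInv₄⟩ :=
    inv_transfer m hG hA₁fin hA₁X hA₁cl g₀.symm ψ hB₂fin hB₂ss hA₁B₂ hInv₃
  rw [show g₀.symm.symm = g₀ from rfl] at hInv₄
  rw [show gimg g₀.symm A₁ = A₀ from gimg_symm_gimg g₀ hA₀X] at hA₀'B'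
  set B' : Set V := aimg ψ B₂ with hB'def
  have hB₁B' : B₁ ⊆ B' := by
    intro b hb
    have h1 : γ₁ b ∈ aimg γ₁ B₁ := mem_aimg γ₁ hb
    have h2 : γ₁ b ∈ B₂ := hC₁B₂ h1
    refine ⟨γ₁ b, h2, ?_⟩
    show ψ (γ₁ b) = b
    rw [hagree₂ (γ₁ b) h1]
    exact γ₁.symm_apply_apply b
  have hψsymm : ∀ b ∈ B₁, ψ.symm b = γ₁ b := by
    intro b hb
    have h1 : ψ (γ₁ b) = b := by
      rw [hagree₂ (γ₁ b) (mem_aimg γ₁ hb)]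
      exact γ₁.symm_apply_apply b
    have h2 := ψ.symm_apply_apply (γ₁ b)
    rw [h1] at h2
    exact h2
  refine ⟨ψ.symm, B', hB'fin, hB'ss, hA₀'B', hBB₁.trans hB₁B', ?_, hB₁B' huB₁, ?_, hInv₄⟩
  · intro b hb
    rw [hψsymm b (hBB₁ hb)]
    exact hagree₁ b hb
  · refine ⟨ψ u, mem_aimg ψ huB₂, ?_⟩
    exact ψ.symm_apply_apply u

theorem extension_lemma' (m : ℕ) (V : Type)
    [Countable V] [Infinite V] (G : SimpleGraph V) (hG : IsGeneric m G)
    (A : Set V) (hA : A.Finite)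
    (g : (G.induce (gcl m G A)) ≃g (G.induce (gcl m G A))) :
    ∃ γ : G ≃g G, ∀ x : ↥(gcl m G A), γ (x : V) = (g x : V) := by
  classical
  obtain ⟨en, hen⟩ := exists_surjective_nat V
  have hA₀X : A ⊆ gcl m G A := subset_gcl m A
  have hXcl : gcl m G A = gcl m G A := rfl
  -- the invariant
  set P : (G ≃g G) × Set V → Prop := fun p =>
    p.2.Finite ∧ SelfSuff m G p.2 Set.univ ∧ A ⊆ p.2 ∧
      ∀ v ∈ p.2 ∩ gcl m G A, p.1 v = fimg g v with hPdef
  obtain ⟨γ₀, hγ₀⟩ := init_step m hG hA hA₀X hXcl g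
  have hP0 : P (γ₀, scl m G A) :=
    ⟨scl_fin m hG hA, scl_ss m hG hA, scl_sub m hG hA, fun v hv => hγ₀ v hv.1⟩
  have hstep : ∀ p : (G ≃g G) × Set V, P p → ∀ u : V,
      ∃ q : (G ≃g G) × Set V, P q ∧ p.2 ⊆ q.2 ∧ (∀ b ∈ p.2, q.1 b = p.1 b) ∧
        u ∈ q.2 ∧ ∃ w ∈ q.2, q.1 w = u := by
    rintro ⟨γc, Bc⟩ ⟨h1, h2, h3, h4⟩ u
    obtain ⟨γ', B', c1, c2, c3, c4, c5, c6, c7, c8⟩ :=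
      full_step m hG hA hA₀X hXcl g γc h1 h2 h3 h4 u
    exact ⟨(γ', B'), ⟨c1, c2, c3, c8⟩, c4, c5, c6, c7⟩
  -- the recursively constructed chain
  set F : ℕ → {p : (G ≃g G) × Set V // P p} := fun n => Nat.rec
    (⟨(γ₀, scl m G A), hP0⟩ : {p : (G ≃g G) × Set V // P p})
    (fun k prev => ⟨(hstep prev.1 prev.2 (en k)).choose,
      ((hstep prev.1 prev.2 (en k)).choose_spec).1⟩) n with hFdef
  set Γ : ℕ → G ≃g G := fun n => (F n).1.1 with hΓdef
  set Bs : ℕ → Set V := fun n => (F n).1.2 with hBsdef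
  have hPn : ∀ n, P (F n).1 := fun n => (F n).2
  have hrel : ∀ k, Bs k ⊆ Bs (k + 1) ∧ (∀ b ∈ Bs k, Γ (k + 1) b = Γ k b) ∧
      en k ∈ Bs (k + 1) ∧ ∃ w ∈ Bs (k + 1), Γ (k + 1) w = en k := by
    intro k
    have h := ((hstep (F k).1 (F k).2 (en k)).choose_spec)
    exact ⟨h.2.1, h.2.2.1, h.2.2.2.1, h.2.2.2.2⟩
  have hBmono : ∀ a b : ℕ, a ≤ b → Bs a ⊆ Bs b := by
    intro a b hab
    induction b, hab using Nat.le_induction with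
    | base => exact subset_rfl
    | succ k hk IH => exact IH.trans (hrel k).1
  have hagree : ∀ a b : ℕ, a ≤ b → ∀ v ∈ Bs a, Γ b v = Γ a v := by
    intro a b hab
    induction b, hab using Nat.le_induction with
    | base => exact fun v _ => rfl
    | succ k hk IH =>
      intro v hv
      rw [(hrel k).2.1 v (hBmono a k hk hv)]
      exact IH v hv
  have hex : ∀ v : V, ∃ n, v ∈ Bs n := by
    intro v
    obtain ⟨k, hk⟩ := hen v
    exact ⟨k + 1, hk ▸ (hrel k).2.2.1⟩
  set nv : V → ℕ := fun v => (hex v).choose with hnvdef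
  have hnv : ∀ v, v ∈ Bs (nv v) := fun v => (hex v).choose_spec
  set φ : V → V := fun v => Γ (nv v) v with hφdef
  have hφ : ∀ n, ∀ v ∈ Bs n, φ v = Γ n v := by
    intro n v hv
    have h1 := hagree (nv v) (max (nv v) n) (le_max_left _ _) v (hnv v)
    have h2 := hagree n (max (nv v) n) (le_max_right _ _) v hv
    show Γ (nv v) v = Γ n v
    rw [← h1, h2]
  have hinj : Function.Injective φ := by
    intro a b hab
    set n := max (nv a) (nv b) with hndef
    rw [hφ n a (hBmono (nv a) n (le_max_left _ _) (hnv a)),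
      hφ n b (hBmono (nv b) n (le_max_right _ _) (hnv b))] at hab
    exact (Γ n).toEquiv.injective hab
  have hsurjφ : Function.Surjective φ := by
    intro u
    obtain ⟨k, hk⟩ := hen u
    obtain ⟨w, hw1, hw2⟩ := (hrel k).2.2.2
    exact ⟨w, by rw [hφ (k + 1) w hw1, hw2, hk]⟩
  have hadjφ : ∀ a b : V, G.Adj (φ a) (φ b) ↔ G.Adj a b := by
    intro a b
    set n := max (nv a) (nv b) with hndef
    rw [hφ n a (hBmono (nv a) n (le_max_left _ _) (hnv a)),
      hφ n b (hBmono (nv b) n (le_max_right _ _) (hnv b))]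
    exact (Γ n).map_adj_iff
  refine ⟨⟨Equiv.ofBijective φ ⟨hinj, hsurjφ⟩, ?_⟩, ?_⟩
  · intro a b
    exact hadjφ a b
  · intro x
    show φ ↑x = (g x : V)
    obtain ⟨n, hn⟩ := hex ↑x
    rw [hφ n ↑x hn]
    have h1 := (hPn n).2.2.2 ↑x ⟨hn, x.2⟩
    rw [h1, fimg_mem g x.2]

end ExtAux

/-- Extension lemma: every automorphism of the induced subgraph on `X = gcl(A)`
(`A` finite) extends to an automorphism of the generic graph `M`. -/
theorem extension_lemma (m : ℕ) (hm : 2 ≤ m) (V : Type)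
    [Countable V] [Infinite V] (G : SimpleGraph V) (hG : IsGeneric m G)
    (A : Set V) (hA : A.Finite)
    (g : (G.induce (gcl m G A)) ≃g (G.induce (gcl m G A))) :
    ∃ γ : G ≃g G, ∀ x : ↥(gcl m G A), γ (x : V) = (g x : V) :=
  ExtAux.extension_lemma' m V G hG A hA g
end

section
/- Extension property of the zero-predimension class: let C = { A ∈ K₀ : δ(A) = 0 }. For every finite graph A ∈ C and every finite family e₀, …, e_n of graph isomorphisms between self-sufficient induced subgraphs of A, there exist a finite graph B ∈ C containing A as an induced subgraph and automorphisms f₀, …, f_n of B such that f_i extends e_i for each 0 ≤ i ≤ n. -/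
open scoped Cardinal

namespace EPC

open Set

lemma even_ncard_of_swap {α : Type*} [Finite α] :
    ∀ (n : ℕ) (S : Set (α × α)), S.ncard ≤ n → (∀ p ∈ S, Prod.swap p ∈ S) →
      (∀ p ∈ S, p.1 ≠ p.2) → Even S.ncard := by
  intro n
  induction n with
  | zero => intro S hS _ _; simp [Nat.le_zero.mp hS]
  | succ n IH =>
    intro S hS hswap hne
    rcases S.eq_empty_or_nonempty with rfl | ⟨p, hp⟩
    · simp
    have hps : p ≠ Prod.swap p := by
      intro h
      exact hne p hp (congrArg Prod.fst h)
    have hsub : ({p, Prod.swap p} : Set (α × α)) ⊆ S := by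
      rintro q (rfl | rfl)
      · exact hp
      · exact hswap p hp
    have hpair : ({p, Prod.swap p} : Set (α × α)).ncard = 2 := Set.ncard_pair hps
    have hdiff : (S \ {p, Prod.swap p}).ncard = S.ncard - 2 := by
      rw [Set.ncard_diff hsub (Set.toFinite _), hpair]
    have h2le : 2 ≤ S.ncard := by
      have := Set.ncard_le_ncard hsub (Set.toFinite S)
      omega
    have hT : Even (S \ {p, Prod.swap p}).ncard := by
      refine IH _ ?_ ?_ ?_
      · omega
      · rintro q ⟨hq, hq2⟩
        refine ⟨hswap q hq, ?_⟩
        intro h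
        rcases h with h | h
        · exact hq2 (Or.inr (by rw [← h]; simp))
        · exact hq2 (Or.inl (by simpa using congrArg Prod.swap h))
      · exact fun q hq => hne q hq.1
    rw [hdiff] at hT
    rcases hT with ⟨k, hk⟩
    exact ⟨k + 1, by omega⟩

variable {V : Type*} [Finite V] (m : ℕ) (G : SimpleGraph V)

/-- The set of ordered adjacent pairs inside `A`. -/
def pairSet (A : Set V) : Set (V × V) :=
  {p : V × V | p.1 ∈ A ∧ p.2 ∈ A ∧ G.Adj p.1 p.2}

lemma edgeCount_eq (A : Set V) : edgeCount G A = (pairSet G A).ncard / 2 := rfl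

lemma even_pairSet (A : Set V) : Even (pairSet G A).ncard := by
  refine even_ncard_of_swap (pairSet G A).ncard _ le_rfl ?_ ?_
  · rintro ⟨a, b⟩ ⟨h1, h2, h3⟩
    exact ⟨h2, h1, h3.symm⟩
  · rintro ⟨a, b⟩ ⟨_, _, h3⟩
    exact h3.ne

lemma two_mul_edgeCount (A : Set V) :
    ((edgeCount G A : ℤ)) * 2 = ((pairSet G A).ncard : ℤ) := by
  rcases even_pairSet G A with ⟨k, hk⟩
  rw [edgeCount_eq, hk]
  norm_num
  omega

lemma two_mul_delta (A : Set V) :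
    2 * delta m G A = 2 * (m : ℤ) * A.ncard - (pairSet G A).ncard := by
  have := two_mul_edgeCount G A
  unfold delta
  linarith

lemma pairSet_inter (A B : Set V) :
    pairSet G A ∩ pairSet G B = pairSet G (A ∩ B) := by
  ext ⟨a, b⟩
  constructor
  · rintro ⟨⟨h1, h2, h3⟩, ⟨h4, h5, _⟩⟩
    exact ⟨⟨h1, h4⟩, ⟨h2, h5⟩, h3⟩
  · rintro ⟨⟨h1, h4⟩, ⟨h2, h5⟩, h3⟩
    exact ⟨⟨h1, h2, h3⟩, ⟨h4, h5, h3⟩, ⟩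

lemma pairSet_mono {A B : Set V} (h : A ⊆ B) : pairSet G A ⊆ pairSet G B := by
  rintro ⟨a, b⟩ ⟨h1, h2, h3⟩
  exact ⟨h h1, h h2, h3⟩

lemma delta_submod (A B : Set V) :
    delta m G (A ∪ B) + delta m G (A ∩ B) ≤ delta m G A + delta m G B := by
  have hv : (A ∪ B).ncard + (A ∩ B).ncard = A.ncard + B.ncard :=
    Set.ncard_union_add_ncard_inter A B (Set.toFinite A) (Set.toFinite B)
  have hp : (pairSet G A ∪ pairSet G B).ncard + (pairSet G (A ∩ B)).ncard
      = (pairSet G A).ncard + (pairSet G B).ncard := by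
    rw [← pairSet_inter]
    exact Set.ncard_union_add_ncard_inter _ _ (Set.toFinite _) (Set.toFinite _)
  have hle : (pairSet G A ∪ pairSet G B).ncard ≤ (pairSet G (A ∪ B)).ncard := by
    refine Set.ncard_le_ncard ?_ (Set.toFinite _)
    refine Set.union_subset (pairSet_mono G Set.subset_union_left)
      (pairSet_mono G Set.subset_union_right)
  have d1 := two_mul_delta m G (A ∪ B)
  have d2 := two_mul_delta m G (A ∩ B)
  have d3 := two_mul_delta m G A
  have d4 := two_mul_delta m G B
  have hvz : ((A ∪ B).ncard : ℤ) + ((A ∩ B).ncard : ℤ) = (A.ncard : ℤ) + (B.ncard : ℤ) := by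
    exact_mod_cast hv
  have hpz : ((pairSet G A ∪ pairSet G B).ncard : ℤ) + ((pairSet G (A ∩ B)).ncard : ℤ)
      = ((pairSet G A).ncard : ℤ) + ((pairSet G B).ncard : ℤ) := by exact_mod_cast hp
  have hlez : ((pairSet G A ∪ pairSet G B).ncard : ℤ) ≤ ((pairSet G (A ∪ B)).ncard : ℤ) := by
    exact_mod_cast hle
  have hmul := congrArg (fun t : ℤ => 2 * (m : ℤ) * t) hvz
  simp only [mul_add] at hmul
  linarith

lemma delta_empty : delta m G (∅ : Set V) = 0 := by
  have h : pairSet G (∅ : Set V) = ∅ := by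
    ext ⟨a, b⟩; simp [pairSet]
  have := two_mul_delta m G (∅ : Set V)
  rw [h] at this
  simp at this
  linarith

lemma zero_union (hK : InK0 m G) {A B : Set V} (hA : delta m G A = 0) (hB : delta m G B = 0) :
    delta m G (A ∪ B) = 0 := by
  have h := delta_submod m G A B
  have h1 := hK (A ∪ B)
  have h2 := hK (A ∩ B)
  linarith

lemma zero_inter (hK : InK0 m G) {A B : Set V} (hA : delta m G A = 0) (hB : delta m G B = 0) :
    delta m G (A ∩ B) = 0 := by
  have h := delta_submod m G A B
  have h1 := hK (A ∪ B)
  have h2 := hK (A ∩ B)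
  linarith

lemma key_lemma (hK : InK0 m G) {Z : Set V} (hZ : delta m G Z = 0) (X : Set V) :
    delta m G (X ∩ Z) ≤ delta m G X := by
  have h := delta_submod m G X Z
  have h1 := hK (X ∪ Z)
  linarith

lemma cross_lemma (hK : InK0 m G) {Z₁ Z₂ : Set V} (hZ1 : delta m G Z₁ = 0)
    (hZ2 : delta m G Z₂ = 0) {u u' : V} (hu : u ∈ Z₁) (hu' : u' ∈ Z₂)
    (hadj : G.Adj u u') : u ∈ Z₂ ∨ u' ∈ Z₁ := by
  by_contra hcon
  push_neg at hcon
  obtain ⟨h1, h2⟩ := hcon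
  set S := pairSet G Z₁ ∪ pairSet G Z₂ with hS
  have hm1 : (u, u') ∉ S := by
    rintro (⟨_, hb, _⟩ | ⟨ha, _, _⟩)
    · exact h2 hb
    · exact h1 ha
  have hm2 : (u', u) ∉ insert (u, u') S := by
    rintro (heq | ⟨ha, _, _⟩ | ⟨_, hb, _⟩)
    · exact hadj.ne' (congrArg Prod.fst heq)
    · exact h2 ha
    · exact h1 hb
  have hT1 : (insert (u', u) (insert (u, u') S)).ncard = S.ncard + 2 := by
    rw [Set.ncard_insert_of_notMem hm2 (Set.toFinite _),
      Set.ncard_insert_of_notMem hm1 (Set.toFinite _)]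
  have hTsub : insert (u', u) (insert (u, u') S) ⊆ pairSet G (Z₁ ∪ Z₂) := by
    rintro p (rfl | rfl | hp)
    · exact ⟨Or.inr hu', Or.inl hu, hadj.symm⟩
    · exact ⟨Or.inl hu, Or.inr hu', hadj⟩
    · rcases hp with hp | hp
      · exact pairSet_mono G Set.subset_union_left hp
      · exact pairSet_mono G Set.subset_union_right hp
  have hle : S.ncard + 2 ≤ (pairSet G (Z₁ ∪ Z₂)).ncard := by
    rw [← hT1]
    exact Set.ncard_le_ncard hTsub (Set.toFinite _)
  have hp : S.ncard + (pairSet G (Z₁ ∩ Z₂)).ncard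
      = (pairSet G Z₁).ncard + (pairSet G Z₂).ncard := by
    rw [← pairSet_inter]
    exact Set.ncard_union_add_ncard_inter _ _ (Set.toFinite _) (Set.toFinite _)
  have hv : (Z₁ ∪ Z₂).ncard + (Z₁ ∩ Z₂).ncard = Z₁.ncard + Z₂.ncard :=
    Set.ncard_union_add_ncard_inter _ _ (Set.toFinite _) (Set.toFinite _)
  have d1 := two_mul_delta m G (Z₁ ∪ Z₂)
  have d2 := two_mul_delta m G (Z₁ ∩ Z₂)
  have d3 := two_mul_delta m G Z₁
  have d4 := two_mul_delta m G Z₂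
  have hvz : ((Z₁ ∪ Z₂).ncard : ℤ) + ((Z₁ ∩ Z₂).ncard : ℤ) = (Z₁.ncard : ℤ) + (Z₂.ncard : ℤ) := by
    exact_mod_cast hv
  have hpz : (S.ncard : ℤ) + ((pairSet G (Z₁ ∩ Z₂)).ncard : ℤ)
      = ((pairSet G Z₁).ncard : ℤ) + ((pairSet G Z₂).ncard : ℤ) := by exact_mod_cast hp
  have hlez : (S.ncard : ℤ) + 2 ≤ ((pairSet G (Z₁ ∪ Z₂)).ncard : ℤ) := by exact_mod_cast hle
  have hmul := congrArg (fun t : ℤ => 2 * (m : ℤ) * t) hvz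
  simp only [mul_add] at hmul
  have h5 := hK (Z₁ ∪ Z₂)
  have h6 := hK (Z₁ ∩ Z₂)
  linarith

lemma decomp_lemma (P Q X : Set V) (hX : X ⊆ P ∪ Q)
    (hcross : ∀ u u', u ∈ X → u ∈ P → u ∉ Q → u' ∈ X → u' ∈ Q → u' ∉ P → ¬ G.Adj u u') :
    delta m G X + delta m G (X ∩ P ∩ Q) = delta m G (X ∩ P) + delta m G (X ∩ Q) := by
  have hXeq : (X ∩ P) ∪ (X ∩ Q) = X := by
    rw [← Set.inter_union_distrib_left]
    exact Set.inter_eq_self_of_subset_left hX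
  have hXint : (X ∩ P) ∩ (X ∩ Q) = X ∩ P ∩ Q := by
    ext a; constructor
    · rintro ⟨⟨ha, hp⟩, ⟨_, hq⟩⟩; exact ⟨⟨ha, hp⟩, hq⟩
    · rintro ⟨⟨ha, hp⟩, hq⟩; exact ⟨⟨ha, hp⟩, ⟨ha, hq⟩⟩
  have hv : X.ncard + (X ∩ P ∩ Q).ncard = (X ∩ P).ncard + (X ∩ Q).ncard := by
    have := Set.ncard_union_add_ncard_inter (X ∩ P) (X ∩ Q) (Set.toFinite _) (Set.toFinite _)
    rwa [hXeq, hXint] at this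
  have hpair : pairSet G X = pairSet G (X ∩ P) ∪ pairSet G (X ∩ Q) := by
    apply Set.Subset.antisymm
    · rintro ⟨a, b⟩ ⟨ha, hb, hab⟩
      by_cases haP : a ∈ P
      · by_cases hbP : b ∈ P
        · exact Or.inl ⟨⟨ha, haP⟩, ⟨hb, hbP⟩, hab⟩
        · have hbQ : b ∈ Q := (hX hb).resolve_left hbP
          by_cases haQ : a ∈ Q
          · exact Or.inr ⟨⟨ha, haQ⟩, ⟨hb, hbQ⟩, hab⟩
          · exact absurd hab (hcross a b ha haP haQ hb hbQ hbP)
      · have haQ : a ∈ Q := (hX ha).resolve_left haP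
        by_cases hbQ : b ∈ Q
        · exact Or.inr ⟨⟨ha, haQ⟩, ⟨hb, hbQ⟩, hab⟩
        · have hbP : b ∈ P := (hX hb).resolve_right hbQ
          exact absurd hab.symm (hcross b a hb hbP hbQ ha haQ haP)
    · exact Set.union_subset (pairSet_mono G Set.inter_subset_left)
        (pairSet_mono G Set.inter_subset_left)
  have hp : (pairSet G X).ncard + (pairSet G (X ∩ P ∩ Q)).ncard
      = (pairSet G (X ∩ P)).ncard + (pairSet G (X ∩ Q)).ncard := by
    have := Set.ncard_union_add_ncard_inter (pairSet G (X ∩ P)) (pairSet G (X ∩ Q))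
      (Set.toFinite _) (Set.toFinite _)
    rwa [← hpair, pairSet_inter, hXint] at this
  have d1 := two_mul_delta m G X
  have d2 := two_mul_delta m G (X ∩ P ∩ Q)
  have d3 := two_mul_delta m G (X ∩ P)
  have d4 := two_mul_delta m G (X ∩ Q)
  have hvz : (X.ncard : ℤ) + ((X ∩ P ∩ Q).ncard : ℤ)
      = ((X ∩ P).ncard : ℤ) + ((X ∩ Q).ncard : ℤ) := by exact_mod_cast hv
  have hpz : ((pairSet G X).ncard : ℤ) + ((pairSet G (X ∩ P ∩ Q)).ncard : ℤ)
      = ((pairSet G (X ∩ P)).ncard : ℤ) + ((pairSet G (X ∩ Q)).ncard : ℤ) := by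
    exact_mod_cast hp
  have hmul := congrArg (fun t : ℤ => 2 * (m : ℤ) * t) hvz
  simp only [mul_add] at hmul
  linarith

lemma transfer_lemma {W : Type*} [Finite W] (H : SimpleGraph W) (θ : V → W) (S : Set V)
    (hinj : Set.InjOn θ S)
    (hadj : ∀ u ∈ S, ∀ u' ∈ S, (H.Adj (θ u) (θ u') ↔ G.Adj u u')) :
    delta m H (θ '' S) = delta m G S := by
  have hv : (θ '' S).ncard = S.ncard := Set.ncard_image_of_injOn hinj
  have hpair : pairSet H (θ '' S) = (Prod.map θ θ) '' pairSet G S := by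
    apply Set.Subset.antisymm
    · rintro ⟨x, y⟩ ⟨⟨u, hu, rfl⟩, ⟨u', hu', rfl⟩, hxy⟩
      exact ⟨(u, u'), ⟨hu, hu', (hadj u hu u' hu').mp hxy⟩, rfl⟩
    · rintro ⟨x, y⟩ ⟨⟨u, u'⟩, ⟨hu, hu', huu⟩, heq⟩
      cases heq
      exact ⟨⟨u, hu, rfl⟩, ⟨u', hu', rfl⟩, (hadj u hu u' hu').mpr huu⟩
  have hinj2 : Set.InjOn (Prod.map θ θ) (pairSet G S) := by
    rintro ⟨a, b⟩ ⟨ha, hb, _⟩ ⟨c, d⟩ ⟨hc, hd, _⟩ heq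
    have h1 := congrArg Prod.fst heq
    have h2 := congrArg Prod.snd heq
    simp only [Prod.map] at h1 h2
    exact Prod.ext (hinj ha hc h1) (hinj hb hd h2)
  have hp : (pairSet H (θ '' S)).ncard = (pairSet G S).ncard := by
    rw [hpair]
    exact Set.ncard_image_of_injOn hinj2
  have d1 := two_mul_delta m H (θ '' S)
  have d2 := two_mul_delta m G S
  have hvz : ((θ '' S).ncard : ℤ) = (S.ncard : ℤ) := by exact_mod_cast hv
  have hpz : ((pairSet H (θ '' S)).ncard : ℤ) = ((pairSet G S).ncard : ℤ) := by exact_mod_cast hp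
  have hmul : 2 * (m : ℤ) * ((θ '' S).ncard : ℤ) = 2 * (m : ℤ) * (S.ncard : ℤ) := by rw [hvz]
  linarith

lemma zero_cover (hK : InK0 m G) (U : Set V)
    (h : ∀ v ∈ U, ∃ Z : Set V, v ∈ Z ∧ Z ⊆ U ∧ delta m G Z = 0) : delta m G U = 0 := by
  classical
  have main : ∀ s : Finset V, ↑s ⊆ U → ∃ Z : Set V, ↑s ⊆ Z ∧ Z ⊆ U ∧ delta m G Z = 0 := by
    intro s
    induction s using Finset.induction_on with
    | empty => exact fun _ => ⟨∅, by simp, Set.empty_subset _, delta_empty m G⟩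
    | insert a s ha IH =>
      intro hs
      have has : (↑s : Set V) ⊆ U := by
        refine subset_trans ?_ hs
        simp
      obtain ⟨Z₁, hZ1a, hZ1b, hZ1c⟩ := IH has
      have haU : a ∈ U := hs (by simp)
      obtain ⟨Z₂, hZ2a, hZ2b, hZ2c⟩ := h a haU
      refine ⟨Z₁ ∪ Z₂, ?_, Set.union_subset hZ1b hZ2b, zero_union m G hK hZ1c hZ2c⟩
      rw [Finset.coe_insert]
      exact Set.insert_subset (Or.inr hZ2a) (subset_trans hZ1a Set.subset_union_left)
  obtain ⟨Z, hZ1, hZ2, hZ3⟩ := main (Set.toFinite U).toFinset (by simp)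
  have : U ⊆ Z := by
    intro v hv
    exact hZ1 (by simp [hv])
  rw [Set.Subset.antisymm this hZ2]
  exact hZ3

section Construction

variable {k : ℕ} (D : Fin k → Set V) (g : Fin k → Equiv.Perm V)

def Step : (V × Equiv.Perm V) → (V × Equiv.Perm V) → Prop := fun x y =>
  ∃ i : Fin k, x.1 ∈ D i ∧ y.1 = (g i) x.1 ∧ x.2 = y.2 * (g i)

def BRel : (V × Equiv.Perm V) → (V × Equiv.Perm V) → Prop :=
  Relation.EqvGen (Step D g)

lemma rel_pi {x y} (h : BRel D g x y) : x.2 x.1 = y.2 y.1 := by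
  induction h with
  | rel x y hs =>
    obtain ⟨i, hd, hy1, hx2⟩ := hs
    rw [hx2, hy1]
    simp [Equiv.Perm.mul_apply]
  | refl x => rfl
  | symm x y _ ih => exact ih.symm
  | trans x y z _ _ ih1 ih2 => exact ih1.trans ih2

variable (m : ℕ) (G : SimpleGraph V) (R : Fin k → Set V)

lemma germ (hGzero : delta m G Set.univ = 0) (hG0 : InK0 m G)
    (hDz : ∀ i, delta m G (D i) = 0) (hRz : ∀ i, delta m G (R i) = 0)
    (hP1 : ∀ i, (g i) '' (D i) = R i)
    (hP2 : ∀ i, ∀ u ∈ D i, ∀ u' ∈ D i, (G.Adj ((g i) u) ((g i) u') ↔ G.Adj u u'))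
    {x y : V × Equiv.Perm V} (h : BRel D g x y) :
    ∃ Z : Set V, x.1 ∈ Z ∧ delta m G Z = 0 ∧
      delta m G ((fun u => (y.2⁻¹ * x.2) u) '' Z) = 0 ∧
      (∀ u ∈ Z, BRel D g (u, x.2) ((y.2⁻¹ * x.2) u, y.2)) ∧
      (∀ u ∈ Z, ∀ u' ∈ Z, G.Adj ((y.2⁻¹ * x.2) u) ((y.2⁻¹ * x.2) u') ↔ G.Adj u u') := by
  induction h with
  | rel x y hs =>
    obtain ⟨i, hd, hy1, hx2⟩ := hs
    have hσ : y.2⁻¹ * x.2 = g i := by rw [hx2]; group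
    rw [hσ]
    refine ⟨D i, hd, hDz i, ?_, ?_, ?_⟩
    · have himg : (fun u => (g i) u) '' (D i) = R i := hP1 i
      rw [himg]
      exact hRz i
    · intro u hu
      exact Relation.EqvGen.rel _ _ ⟨i, hu, rfl, hx2⟩
    · intro u hu u' hu'
      exact hP2 i u hu u' hu'
  | refl x =>
    have hσ : x.2⁻¹ * x.2 = 1 := by group
    rw [hσ]
    refine ⟨Set.univ, trivial, hGzero, ?_, ?_, ?_⟩
    · have : (fun u => (1 : Equiv.Perm V) u) '' Set.univ = Set.univ := by simp
      rw [this]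
      exact hGzero
    · intro u _
      simp only [Equiv.Perm.coe_one, id_eq]
      exact Relation.EqvGen.refl _
    · intro u _ u' _
      simp
  | symm x y hxy ih =>
    obtain ⟨Z, hx1, hZ0, hZ'0, hrel, hadj⟩ := ih
    have hσ' : x.2⁻¹ * y.2 = (y.2⁻¹ * x.2)⁻¹ := by group
    set σ := y.2⁻¹ * x.2 with hσdef
    rw [hσ']
    have hy1 : y.1 = σ x.1 := by
      have hpi := rel_pi D g hxy
      simp only [hσdef, Equiv.Perm.mul_apply]
      rw [hpi]
      simp
    refine ⟨(fun u => σ u) '' Z, ⟨x.1, hx1, hy1.symm⟩, hZ'0, ?_, ?_, ?_⟩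
    · have : (fun u => σ⁻¹ u) '' ((fun u => σ u) '' Z) = Z := by
        rw [Set.image_image]
        simp
      rw [this]
      exact hZ0
    · rintro w ⟨u, hu, rfl⟩
      have : σ⁻¹ (σ u) = u := by simp
      rw [this]
      exact Relation.EqvGen.symm _ _ (hrel u hu)
    · rintro w ⟨u, hu, rfl⟩ w' ⟨u', hu', rfl⟩
      have h1 : σ⁻¹ (σ u) = u := by simp
      have h2 : σ⁻¹ (σ u') = u' := by simp
      rw [h1, h2]
      exact (hadj u hu u' hu').symm
  | trans x y z hxy hyz ih1 ih2 =>
    obtain ⟨Z₁, hx1, hZ10, hZ1'0, hrel1, hadj1⟩ := ih1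
    obtain ⟨Z₂, hy1, hZ20, hZ2'0, hrel2, hadj2⟩ := ih2
    set σ₁ := y.2⁻¹ * x.2 with hσ1def
    set σ₂ := z.2⁻¹ * y.2 with hσ2def
    have hσ : z.2⁻¹ * x.2 = σ₂ * σ₁ := by rw [hσ1def, hσ2def]; group
    rw [hσ]
    have hy1' : y.1 = σ₁ x.1 := by
      have hpi := rel_pi D g hxy
      simp only [hσ1def, Equiv.Perm.mul_apply]
      rw [hpi]
      simp
    set Z := Z₁ ∩ (fun u => σ₁ u) ⁻¹' Z₂ with hZdef
    have hZW : (fun u => σ₁ u) '' Z = ((fun u => σ₁ u) '' Z₁) ∩ Z₂ := by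
      rw [hZdef, Set.image_inter_preimage]
    have hW0 : delta m G (((fun u => σ₁ u) '' Z₁) ∩ Z₂) = 0 :=
      zero_inter m G hG0 hZ1'0 hZ20
    have htr : delta m G ((fun u => σ₁ u) '' Z) = delta m G Z := by
      refine transfer_lemma m G G (fun u => σ₁ u) Z (σ₁.injective.injOn) ?_
      intro u hu u' hu'
      exact hadj1 u hu.1 u' hu'.1
    have hZ0 : delta m G Z = 0 := by rw [← htr, hZW]; exact hW0
    have hmemZ2 : ∀ u ∈ Z, σ₁ u ∈ Z₂ := fun u hu => hu.2
    refine ⟨Z, ⟨hx1, ?_⟩, hZ0, ?_, ?_, ?_⟩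
    · show σ₁ x.1 ∈ Z₂
      rw [← hy1']
      exact hy1
    · have himg : (fun u => (σ₂ * σ₁) u) '' Z = (fun u => σ₂ u) '' ((fun u => σ₁ u) '' Z) := by
        rw [Set.image_image]
        rfl
      rw [himg, hZW]
      have := transfer_lemma m G G (fun u => σ₂ u) (((fun u => σ₁ u) '' Z₁) ∩ Z₂)
        (σ₂.injective.injOn) (fun u hu u' hu' => hadj2 u hu.2 u' hu'.2)
      rw [this]
      exact hW0
    · intro u hu
      have e1 : BRel D g (u, x.2) (σ₁ u, y.2) := hrel1 u hu.1
      have e2 : BRel D g (σ₁ u, y.2) (σ₂ (σ₁ u), z.2) := hrel2 (σ₁ u) (hmemZ2 u hu)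
      have : (σ₂ * σ₁) u = σ₂ (σ₁ u) := rfl
      rw [this]
      exact Relation.EqvGen.trans _ _ _ e1 e2
    · intro u hu u' hu'
      have h1 : (σ₂ * σ₁) u = σ₂ (σ₁ u) := rfl
      have h2 : (σ₂ * σ₁) u' = σ₂ (σ₁ u') := rfl
      rw [h1, h2]
      exact (hadj2 (σ₁ u) (hmemZ2 u hu) (σ₁ u') (hmemZ2 u' hu')).trans
        (hadj1 u hu.1 u' hu'.1)

def bSetoid : Setoid (V × Equiv.Perm V) :=
  ⟨BRel D g, Relation.EqvGen.is_equivalence _⟩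

def BV : Type _ := Quotient (bSetoid D g)

instance : Finite (BV D g) := Quotient.finite _

def bmk (x : V × Equiv.Perm V) : BV D g := Quotient.mk (bSetoid D g) x

lemma bmk_eq_iff {x y} : bmk D g x = bmk D g y ↔ BRel D g x y := by
  constructor
  · intro h
    exact Quotient.exact h
  · intro h
    exact Quotient.sound h

lemma rep_unique {γ : Equiv.Perm V} {v v' : V}
    (h : bmk D g (v, γ) = bmk D g (v', γ)) : v = v' := by
  have := rel_pi D g ((bmk_eq_iff D g).mp h)
  exact γ.injective this

def BAdj (p q : BV D g) : Prop :=
  ∃ γ : Equiv.Perm V, ∃ u u' : V, G.Adj u u' ∧ p = bmk D g (u, γ) ∧ q = bmk D g (u', γ)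

def HB : SimpleGraph (BV D g) where
  Adj := BAdj D g G
  symm := by
    constructor
    rintro p q ⟨γ, u, u', h, hp, hq⟩
    exact ⟨γ, u', u, h.symm, hq, hp⟩
  loopless := by
    constructor
    rintro p ⟨γ, u, u', h, hp, hq⟩
    exact h.ne (rep_unique D g (hp.symm.trans hq))

def theta (γ : Equiv.Perm V) : V → BV D g := fun v => bmk D g (v, γ)

lemma theta_inj (γ : Equiv.Perm V) : Function.Injective (theta D g γ) :=
  fun _ _ h => rep_unique D g h

def copyS (γ : Equiv.Perm V) : Set (BV D g) := Set.range (theta D g γ)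

def Utr (γ δ : Equiv.Perm V) : Set V := {v | ∃ u, BRel D g (v, γ) (u, δ)}

lemma mem_copy_iff {v : V} {γ δ : Equiv.Perm V} :
    bmk D g (v, γ) ∈ copyS D g δ ↔ v ∈ Utr D g γ δ := by
  constructor
  · rintro ⟨u, hu⟩
    exact ⟨u, Relation.EqvGen.symm _ _ ((bmk_eq_iff D g).mp hu)⟩
  · rintro ⟨u, h⟩
    exact ⟨u, (bmk_eq_iff D g).mpr (Relation.EqvGen.symm _ _ h)⟩

def BT (T : Finset (Equiv.Perm V)) : Set (BV D g) := ⋃ γ ∈ T, copyS D g γ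

variable (hGzero : delta m G Set.univ = 0) (hG0 : InK0 m G)
  (hDz : ∀ i, delta m G (D i) = 0) (hRz : ∀ i, delta m G (R i) = 0)
  (hP1 : ∀ i, (g i) '' (D i) = R i)
  (hP2 : ∀ i, ∀ u ∈ D i, ∀ u' ∈ D i, (G.Adj ((g i) u) ((g i) u') ↔ G.Adj u u'))

include hGzero hG0 hDz hRz hP1 hP2

lemma adj_transfer {γ : Equiv.Perm V} {u u' : V}
    (h : BAdj D g G (bmk D g (u, γ)) (bmk D g (u', γ))) : G.Adj u u' := by
  obtain ⟨ε, w, w', hww, hp, hq⟩ := h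
  have h1 : BRel D g (w, ε) (u, γ) := (bmk_eq_iff D g).mp hp.symm
  have h2 : BRel D g (w', ε) (u', γ) := (bmk_eq_iff D g).mp hq.symm
  obtain ⟨Z₁, hw1, hZ10, _, hrel1, hadj1⟩ := germ D g m G R hGzero hG0 hDz hRz hP1 hP2 h1
  obtain ⟨Z₂, hw2, hZ20, _, hrel2, hadj2⟩ := germ D g m G R hGzero hG0 hDz hRz hP1 hP2 h2
  have hpi1 := rel_pi D g h1
  have hpi2 := rel_pi D g h2
  simp only at hpi1 hpi2 hadj1 hadj2
  have hu : (γ⁻¹ * ε) w = u := by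
    simp only [Equiv.Perm.mul_apply]
    rw [hpi1]
    simp
  have hu' : (γ⁻¹ * ε) w' = u' := by
    simp only [Equiv.Perm.mul_apply]
    rw [hpi2]
    simp
  rcases cross_lemma m G hG0 hZ10 hZ20 hw1 hw2 hww with hm | hm
  · have := (hadj2 w hm w' hw2).mpr hww
    rwa [hu, hu'] at this
  · have := (hadj1 w hw1 w' hm).mpr hww
    rwa [hu, hu'] at this

lemma theta_adj (γ : Equiv.Perm V) {u u' : V} :
    (HB D g G).Adj (theta D g γ u) (theta D g γ u') ↔ G.Adj u u' := by
  constructor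
  · intro h
    exact adj_transfer D g m G R hGzero hG0 hDz hRz hP1 hP2 h
  · intro h
    exact ⟨γ, u, u', h, rfl, rfl⟩

lemma delta_theta (γ : Equiv.Perm V) (S : Set V) :
    delta m (HB D g G) (theta D g γ '' S) = delta m G S :=
  transfer_lemma m G (HB D g G) (theta D g γ) S ((theta_inj D g γ).injOn)
    (fun u _ u' _ => theta_adj D g m G R hGzero hG0 hDz hRz hP1 hP2 γ)

lemma Utr_zero (γ δ : Equiv.Perm V) : delta m G (Utr D g γ δ) = 0 := by
  apply zero_cover m G hG0
  rintro v ⟨u, hrel⟩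
  obtain ⟨Z, hv, hZ0, _, hrelZ, _⟩ := germ D g m G R hGzero hG0 hDz hRz hP1 hP2 hrel
  exact ⟨Z, hv, fun w hw => ⟨_, hrelZ w hw⟩, hZ0⟩

lemma cross_copies {δ γ : Equiv.Perm V} {p q : BV D g} (hpP : p ∈ copyS D g δ)
    (hpnQ : p ∉ copyS D g γ) (hqQ : q ∈ copyS D g γ) (hqnP : q ∉ copyS D g δ) :
    ¬ (HB D g G).Adj p q := by
  rintro ⟨ε, w, w', hww, rfl, rfl⟩
  obtain ⟨uδ, h1⟩ := (mem_copy_iff D g).mp hpP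
  obtain ⟨uγ, h2⟩ := (mem_copy_iff D g).mp hqQ
  obtain ⟨Z₁, hw1, hZ10, _, hrel1, _⟩ := germ D g m G R hGzero hG0 hDz hRz hP1 hP2 h1
  obtain ⟨Z₂, hw2, hZ20, _, hrel2, _⟩ := germ D g m G R hGzero hG0 hDz hRz hP1 hP2 h2
  rcases cross_lemma m G hG0 hZ10 hZ20 hw1 hw2 hww with hm | hm
  · exact hpnQ ((mem_copy_iff D g).mpr ⟨_, hrel2 w hm⟩)
  · exact hqnP ((mem_copy_iff D g).mpr ⟨_, hrel1 w' hm⟩)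

lemma BT_good : ∀ T : Finset (Equiv.Perm V),
    (∀ X : Set (BV D g), X ⊆ BT D g T → 0 ≤ delta m (HB D g G) X) ∧
      delta m (HB D g G) (BT D g T) = 0 := by
  classical
  intro T
  induction T using Finset.induction_on with
  | empty =>
    have hempty : BT D g (∅ : Finset (Equiv.Perm V)) = ∅ := by
      simp [BT]
    constructor
    · intro X hX
      rw [hempty] at hX
      rw [Set.subset_empty_iff.mp hX, delta_empty]
    · rw [hempty, delta_empty]
  | @insert γ T hγT IH =>
    obtain ⟨IH1, IH2⟩ := IH
    have hins : BT D g (insert γ T) = copyS D g γ ∪ BT D g T := by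
      simp [BT, Set.biUnion_insert]
    set P := BT D g T with hPdef
    set Q := copyS D g γ with hQdef
    have hmemP : ∀ p : BV D g, p ∈ P ↔ ∃ δ ∈ T, p ∈ copyS D g δ := by
      intro p
      simp [hPdef, BT, Set.mem_iUnion]
    set Uh := {v : V | bmk D g (v, γ) ∈ P} with hUhdef
    have hUh0 : delta m G Uh = 0 := by
      apply zero_cover m G hG0
      intro v hv
      obtain ⟨δ, hδT, hmem⟩ := (hmemP _).mp hv
      refine ⟨Utr D g γ δ, (mem_copy_iff D g).mp hmem, ?_,
        Utr_zero D g m G R hGzero hG0 hDz hRz hP1 hP2 γ δ⟩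
      intro w hw
      exact (hmemP _).mpr ⟨δ, hδT, (mem_copy_iff D g).mpr hw⟩
    have hcross : ∀ p q : BV D g, p ∈ P → p ∉ Q → q ∈ Q → q ∉ P →
        ¬ (HB D g G).Adj p q := by
      intro p q hpP hpnQ hqQ hqnP
      obtain ⟨δ, hδT, hpδ⟩ := (hmemP p).mp hpP
      have hqnδ : q ∉ copyS D g δ := fun hc => hqnP ((hmemP q).mpr ⟨δ, hδT, hc⟩)
      exact cross_copies D g m G R hGzero hG0 hDz hRz hP1 hP2 hpδ hpnQ hqQ hqnδ
    have hThetaUh : theta D g γ '' Uh = P ∩ Q := by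
      ext p
      constructor
      · rintro ⟨v, hv, rfl⟩
        exact ⟨hv, ⟨v, rfl⟩⟩
      · rintro ⟨hp, ⟨v, rfl⟩⟩
        exact ⟨v, hp, rfl⟩
    constructor
    · intro X hX
      rw [hins] at hX
      have hdec := decomp_lemma m (HB D g G) P Q X (by rw [Set.union_comm]; exact hX)
        (fun u u' _ h1 h2 _ h3 h4 => hcross u u' h1 h2 h3 h4)
      have hXQ : X ∩ Q = theta D g γ '' (theta D g γ ⁻¹' X) := by
        rw [Set.image_preimage_eq_inter_range]
        rfl
      have hXPQ : X ∩ P ∩ Q = theta D g γ '' (theta D g γ ⁻¹' X ∩ Uh) := by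
        rw [Set.image_inter (theta_inj D g γ), hThetaUh, ← hXQ]
        ext p
        constructor
        · rintro ⟨⟨h1, h2⟩, h3⟩
          exact ⟨⟨h1, h3⟩, ⟨h2, h3⟩⟩
        · rintro ⟨⟨h1, h3⟩, ⟨h2, _⟩⟩
          exact ⟨⟨h1, h2⟩, h3⟩
      have e1 : delta m (HB D g G) (X ∩ Q) = delta m G (theta D g γ ⁻¹' X) := by
        rw [hXQ]
        exact delta_theta D g m G R hGzero hG0 hDz hRz hP1 hP2 γ _
      have e2 : delta m (HB D g G) (X ∩ P ∩ Q)
          = delta m G (theta D g γ ⁻¹' X ∩ Uh) := by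
        rw [hXPQ]
        exact delta_theta D g m G R hGzero hG0 hDz hRz hP1 hP2 γ _
      have e3 : delta m G (theta D g γ ⁻¹' X ∩ Uh) ≤ delta m G (theta D g γ ⁻¹' X) :=
        key_lemma m G hG0 hUh0 _
      have e4 : 0 ≤ delta m (HB D g G) (X ∩ P) := IH1 _ Set.inter_subset_right
      linarith
    · have hsub : Q ∪ P ⊆ P ∪ Q := by rw [Set.union_comm]
      have hdec := decomp_lemma m (HB D g G) P Q (Q ∪ P) hsub
        (fun u u' _ h1 h2 _ h3 h4 => hcross u u' h1 h2 h3 h4)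
      have hQP_P : (Q ∪ P) ∩ P = P := Set.union_inter_cancel_right
      have hQP_Q : (Q ∪ P) ∩ Q = Q := Set.union_inter_cancel_left
      have hQ0 : delta m (HB D g G) Q = 0 := by
        have : Q = theta D g γ '' Set.univ := by
          rw [Set.image_univ]
          rfl
        rw [this, delta_theta D g m G R hGzero hG0 hDz hRz hP1 hP2 γ Set.univ, hGzero]
      have hPQ0 : delta m (HB D g G) (P ∩ Q) = 0 := by
        rw [← hThetaUh, delta_theta D g m G R hGzero hG0 hDz hRz hP1 hP2 γ Uh, hUh0]
      rw [hins]
      rw [hQP_P, hQP_Q] at hdec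
      linarith
  

lemma HB_final : InK0 m (HB D g G) ∧ delta m (HB D g G) Set.univ = 0 := by
  classical
  cases nonempty_fintype (Equiv.Perm V)
  have huniv : BT D g (Finset.univ : Finset (Equiv.Perm V)) = Set.univ := by
    ext p
    simp only [Set.mem_univ, iff_true, BT, Set.mem_iUnion]
    obtain ⟨⟨v, γ⟩, rfl⟩ := Quotient.exists_rep p
    exact ⟨γ, Finset.mem_univ γ, ⟨v, rfl⟩⟩
  constructor
  · intro X
    exact (BT_good D g m G R hGzero hG0 hDz hRz hP1 hP2 Finset.univ).1 X
      (by rw [huniv]; exact Set.subset_univ X)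
  · rw [← huniv]
    exact (BT_good D g m G R hGzero hG0 hDz hRz hP1 hP2 Finset.univ).2

end Construction

section Shift

variable {k : ℕ} (D : Fin k → Set V) (g : Fin k → Equiv.Perm V) (m : ℕ) (G : SimpleGraph V)

-- ### shift
lemma rel_shift (γ0 : Equiv.Perm V) {x y : V × Equiv.Perm V} (h : BRel D g x y) :
    BRel D g (x.1, γ0 * x.2) (y.1, γ0 * y.2) := by
  induction h with
  | rel x y hs =>
    obtain ⟨j, hd, hy1, hx2⟩ := hs
    exact Relation.EqvGen.rel _ _ ⟨j, hd, hy1, by rw [hx2, mul_assoc]⟩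
  | refl x => exact Relation.EqvGen.refl _
  | symm x y _ ih => exact Relation.EqvGen.symm _ _ ih
  | trans x y z _ _ ih1 ih2 => exact Relation.EqvGen.trans _ _ _ ih1 ih2

def shiftEquiv (γ0 : Equiv.Perm V) : BV D g ≃ BV D g where
  toFun := Quotient.map (fun x => (x.1, γ0 * x.2)) (fun _ _ h => rel_shift D g γ0 h)
  invFun := Quotient.map (fun x => (x.1, γ0⁻¹ * x.2)) (fun _ _ h => rel_shift D g γ0⁻¹ h)
  left_inv := by
    intro p
    obtain ⟨x, rfl⟩ := Quotient.exists_rep p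
    show Quotient.mk _ (x.1, γ0⁻¹ * (γ0 * x.2)) = Quotient.mk _ x
    rw [inv_mul_cancel_left]
  right_inv := by
    intro p
    obtain ⟨x, rfl⟩ := Quotient.exists_rep p
    show Quotient.mk _ (x.1, γ0 * (γ0⁻¹ * x.2)) = Quotient.mk _ x
    rw [mul_inv_cancel_left]

lemma shift_shift (γ0 : Equiv.Perm V) (p : BV D g) :
    shiftEquiv D g γ0⁻¹ (shiftEquiv D g γ0 p) = p := by
  obtain ⟨x, rfl⟩ := Quotient.exists_rep p
  show Quotient.mk _ (x.1, γ0⁻¹ * (γ0 * x.2)) = Quotient.mk _ x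
  rw [inv_mul_cancel_left]

lemma badj_shift (γ0 : Equiv.Perm V) {p q : BV D g} (h : BAdj D g G p q) :
    BAdj D g G (shiftEquiv D g γ0 p) (shiftEquiv D g γ0 q) := by
  obtain ⟨ε, u, u', huu, rfl, rfl⟩ := h
  exact ⟨γ0 * ε, u, u', huu, rfl, rfl⟩

def shiftIso (γ0 : Equiv.Perm V) : HB D g G ≃g HB D g G where
  toEquiv := shiftEquiv D g γ0
  map_rel_iff' := by
    intro p q
    constructor
    · intro h
      have h2 := badj_shift D g G γ0⁻¹ h
      rwa [shift_shift, shift_shift] at h2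
    · intro h
      exact badj_shift D g G γ0 h

lemma shift_bmk_one {i : Fin k} {d : V} (hd : d ∈ D i) :
    shiftEquiv D g (g i) (bmk D g (d, 1)) = bmk D g ((g i) d, 1) := by
  show Quotient.mk _ (d, g i * 1) = Quotient.mk _ ((g i) d, 1)
  apply Quotient.sound
  exact Relation.EqvGen.rel _ _ ⟨i, hd, rfl, by rw [mul_one, one_mul]⟩


end Shift
lemma exists_perm_extend {V : Type*} [Finite V] (Ds Rs : Set V) (eq : ↥Ds ≃ ↥Rs) :
    ∃ g : Equiv.Perm V, ∀ d (hd : d ∈ Ds), g d = ↑(eq ⟨d, hd⟩) := by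
  classical
  cases nonempty_fintype V
  haveI : Fintype ↥Ds := Fintype.ofFinite _
  haveI : Fintype ↥Rs := Fintype.ofFinite _
  haveI : Fintype ↥(Dsᶜ) := Fintype.ofFinite _
  haveI : Fintype ↥(Rsᶜ) := Fintype.ofFinite _
  have hcard : Fintype.card ↥(Dsᶜ) = Fintype.card ↥(Rsᶜ) := by
    have h1 : Fintype.card ↥Ds = Fintype.card ↥Rs := Fintype.card_congr eq
    have h2 : Fintype.card ↥(Dsᶜ) = Fintype.card V - Fintype.card ↥Ds := by
      convert Fintype.card_compl_set Ds
    have h3 : Fintype.card ↥(Rsᶜ) = Fintype.card V - Fintype.card ↥Rs := by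
      convert Fintype.card_compl_set Rs
    rw [h2, h3, h1]
  let c : ↥(Dsᶜ) ≃ ↥(Rsᶜ) := Fintype.equivOfCardEq hcard
  refine ⟨(Equiv.Set.sumCompl Ds).symm.trans ((eq.sumCongr c).trans (Equiv.Set.sumCompl Rs)), ?_⟩
  intro d hd
  simp [Equiv.Set.sumCompl_symm_apply_of_mem hd]


end EPC

/-- Extension property of the class `C = { A ∈ K₀ : δ(A) = 0 }`: given a finite
graph `G ∈ C` and finitely many isomorphisms `e i` between self-sufficient induced
subgraphs of `G`, there is a finite graph `H ∈ C` containing `G` as an induced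
subgraph together with automorphisms `f i` of `H` extending the `e i`. -/
theorem extension_property_C (m : ℕ) (hm : 2 ≤ m) (V : Type) [Fintype V]
    (G : SimpleGraph V) (hG0 : InK0 m G) (hGzero : delta m G Set.univ = 0)
    (n : ℕ) (D R : Fin (n + 1) → Set V)
    (hD : ∀ i, SelfSuff m G (D i) Set.univ) (hR : ∀ i, SelfSuff m G (R i) Set.univ)
    (e : ∀ i, G.induce (D i) ≃g G.induce (R i)) :
    ∃ (W : Type) (_ : Fintype W) (H : SimpleGraph W) (ι : G ↪g H),
      InK0 m H ∧ delta m H Set.univ = 0 ∧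
      ∀ i, ∃ f : H ≃g H, ∀ d : ↥(D i), f (ι (d : V)) = ι (((e i) d : ↥(R i)) : V) := by
  classical
  have hDz : ∀ i, delta m G (D i) = 0 := by
    intro i
    have h1 := (hD i).2 Set.univ (Set.toFinite _) (hD i).1 subset_rfl
    have h2 := hG0 (D i)
    rw [hGzero] at h1
    linarith
  have hRz : ∀ i, delta m G (R i) = 0 := by
    intro i
    have h1 := (hR i).2 Set.univ (Set.toFinite _) (hR i).1 subset_rfl
    have h2 := hG0 (R i)
    rw [hGzero] at h1
    linarith
  choose g hg using fun i => EPC.exists_perm_extend (D i) (R i) (e i).toEquiv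
  have hP1 : ∀ i, ⇑(g i) '' (D i) = R i := by
    intro i
    ext r
    constructor
    · rintro ⟨d, hd, rfl⟩
      rw [hg i d hd]
      exact ((e i).toEquiv ⟨d, hd⟩).2
    · intro hr
      refine ⟨↑((e i).toEquiv.symm ⟨r, hr⟩), ((e i).toEquiv.symm ⟨r, hr⟩).2, ?_⟩
      rw [hg i _ ((e i).toEquiv.symm ⟨r, hr⟩).2]
      have h2 : (⟨↑((e i).toEquiv.symm ⟨r, hr⟩), ((e i).toEquiv.symm ⟨r, hr⟩).2⟩ : ↥(D i))
          = (e i).toEquiv.symm ⟨r, hr⟩ := rfl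
      rw [h2, Equiv.apply_symm_apply]
  have hP2 : ∀ i, ∀ u ∈ D i, ∀ u' ∈ D i,
      (G.Adj ((g i) u) ((g i) u') ↔ G.Adj u u') := by
    intro i u hu u' hu'
    rw [hg i u hu, hg i u' hu']
    have h := (e i).map_rel_iff (a := ⟨u, hu⟩) (b := ⟨u', hu'⟩)
    simpa using h
  have hfin := EPC.HB_final D g m G R hGzero hG0 hDz hRz hP1 hP2
  refine ⟨EPC.BV D g, Fintype.ofFinite _, EPC.HB D g G,
    ⟨⟨EPC.theta D g 1, EPC.theta_inj D g 1⟩,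
      fun {a b} => EPC.theta_adj D g m G R hGzero hG0 hDz hRz hP1 hP2 1⟩,
    hfin.1, hfin.2, ?_⟩
  intro i
  refine ⟨EPC.shiftIso D g G (g i), ?_⟩
  intro d
  have h1 : EPC.shiftIso D g G (g i) (EPC.theta D g 1 ↑d)
      = EPC.bmk D g ((g i) ↑d, 1) := EPC.shift_bmk_one D g d.2
  have h2 : (g i) (↑d : V) = ↑((e i) d) := hg i ↑d d.2
  show EPC.shiftIso D g G (g i) (EPC.theta D g 1 ↑d) = EPC.theta D g 1 ↑((e i) d)
  rw [h1, h2]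
  rfl
end
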